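/- arXiv:0710.1459 — 5 statements merged into one kernel-verified Lean document; each statement's English description precedes it below -/
import Mathlib

section
/- If a_1⋯a_m = b_1⋯b_m (the boxes P and Q have equal volume), then P and Q are approximately Π-congruent: there exist a nonzero linear functional π on ℝ^m, a countable family (P_i) of pairwise disjoint half-open boxes whose union is P, and vectors v_i ∈ ℝ^m with π(v_i) = 0 for all i, such that the translates P_i + v_i are pairwise disjoint and their union is Q. -/
open scoped BigOperators

/-- The half-open box `[u_1, w_1) × ⋯ × [u_m, w_m)` in `ℝ^m`. -/
def HBox {m : ℕ} (u w : Fin m → ℝ) : Set (Fin m → ℝ) :=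
  {x | ∀ j, u j ≤ x j ∧ x j < w j}

lemma hbox_mem {m : ℕ} {u w x : Fin m → ℝ} :
    x ∈ HBox u w ↔ ∀ j, u j ≤ x j ∧ x j < w j := Iff.rfl

lemma hbox_translate {m : ℕ} (u w v : Fin m → ℝ) :
    (fun x => x + v) '' HBox u w = HBox (u + v) (w + v) := by
  ext x
  constructor
  · rintro ⟨y, hy, rfl⟩ j
    have := hy j
    simp only [Pi.add_apply]
    constructor <;> linarith [this.1, this.2]
  · intro hx
    refine ⟨x - v, fun j => ?_, by simp⟩
    have := hx j
    simp only [Pi.add_apply] at this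
    simp only [Pi.sub_apply]
    constructor <;> linarith [this.1, this.2]

lemma hbox_congr {m : ℕ} {u w u' w' : Fin m → ℝ} (hu : ∀ j, u j = u' j)
    (hw : ∀ j, w j = w' j) : HBox u w = HBox u' w' := by
  rw [funext hu, funext hw]

lemma hbox_split_union {m : ℕ} (u w : Fin m → ℝ) (j0 : Fin m) (θ : ℝ)
    (h1 : u j0 ≤ θ) (h2 : θ ≤ w j0) :
    HBox u w = HBox u (Function.update w j0 θ) ∪ HBox (Function.update u j0 θ) w := by
  ext x
  constructor
  · intro hx
    rcases lt_or_ge (x j0) θ with h | h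
    · exact Or.inl (fun j => by
        rcases eq_or_ne j j0 with rfl | hj
        · exact ⟨(hx j).1, by simpa using h⟩
        · simpa [Function.update_of_ne hj] using hx j)
    · exact Or.inr (fun j => by
        rcases eq_or_ne j j0 with rfl | hj
        · exact ⟨by simpa using h, (hx j).2⟩
        · simpa [Function.update_of_ne hj] using hx j)
  · rintro (hx | hx) j
    · rcases eq_or_ne j j0 with rfl | hj
      · have := hx j
        simp only [Function.update_self] at this
        exact ⟨this.1, lt_of_lt_of_le this.2 h2⟩
      · simpa [Function.update_of_ne hj] using hx j
    · rcases eq_or_ne j j0 with rfl | hj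
      · have := hx j
        simp only [Function.update_self] at this
        exact ⟨le_trans h1 this.1, this.2⟩
      · simpa [Function.update_of_ne hj] using hx j

lemma hbox_split_disjoint {m : ℕ} (u w : Fin m → ℝ) (j0 : Fin m) (θ : ℝ) :
    Disjoint (HBox u (Function.update w j0 θ)) (HBox (Function.update u j0 θ) w) := by
  rw [Set.disjoint_left]
  intro x hx hx'
  have h1 := (hx j0).2
  have h2 := (hx' j0).1
  simp only [Function.update_self] at h1 h2
  linarith

def Equi {m : ℕ} (pi : (Fin m → ℝ) →ₗ[ℝ] ℝ) (P Q : Set (Fin m → ℝ)) : Prop :=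
  ∃ u w v : ℕ → Fin m → ℝ,
      (∀ k k' : ℕ, k ≠ k' →
        Disjoint (HBox (u k) (w k)) (HBox (u k') (w k'))) ∧
      (⋃ k, HBox (u k) (w k)) = P ∧
      (∀ k, pi (v k) = 0) ∧
      (∀ k k' : ℕ, k ≠ k' →
        Disjoint ((fun x => x + v k) '' HBox (u k) (w k))
          ((fun x => x + v k') '' HBox (u k') (w k'))) ∧
      (⋃ k, (fun x => x + v k) '' HBox (u k) (w k)) = Q

lemma hbox_empty {m : ℕ} (hm : 1 ≤ m) :
    HBox (fun _ : Fin m => (1:ℝ)) (fun _ => (0:ℝ)) = ∅ := by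
  ext x
  simp only [Set.mem_empty_iff_false, iff_false, HBox, Set.mem_setOf_eq]
  intro h
  have := h ⟨0, hm⟩
  linarith [this.1, this.2]

lemma equi_refl {m : ℕ} (hm : 1 ≤ m) (pi : (Fin m → ℝ) →ₗ[ℝ] ℝ) (a c : Fin m → ℝ) :
    Equi pi (HBox a c) (HBox a c) := by
  refine ⟨fun n => if n = 0 then a else fun _ => 1,
    fun n => if n = 0 then c else fun _ => 0, fun _ => 0, ?_, ?_, ?_, ?_, ?_⟩
  · intro k k' hkk'
    rcases eq_or_ne k 0 with rfl | hk
    · simp [if_neg (Ne.symm hkk'), hbox_empty hm]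
    · simp [if_neg hk, hbox_empty hm]
  · ext x
    simp only [Set.mem_iUnion]
    constructor
    · rintro ⟨n, hn⟩
      rcases eq_or_ne n 0 with rfl | h
      · simpa using hn
      · rw [if_neg h, if_neg h, hbox_empty hm] at hn; exact hn.elim
    · intro h; exact ⟨0, by simpa using h⟩
  · simp
  · intro k k' hkk'
    rcases eq_or_ne k 0 with rfl | hk
    · simp [if_neg (Ne.symm hkk'), hbox_empty hm]
    · simp [if_neg hk, hbox_empty hm]
  · ext x
    simp only [Set.mem_iUnion]
    constructor
    · rintro ⟨n, hn⟩
      rcases eq_or_ne n 0 with rfl | h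
      · simpa using hn
      · rw [if_neg h, if_neg h, hbox_empty hm] at hn; simp at hn
    · intro h; exact ⟨0, by simpa using h⟩

lemma equi_trans {m : ℕ} {pi : (Fin m → ℝ) →ₗ[ℝ] ℝ} {P Q R : Set (Fin m → ℝ)}
    (h1 : Equi pi P Q) (h2 : Equi pi Q R) : Equi pi P R := by
  obtain ⟨u1, w1, v1, d1, un1, p1, d1', un1'⟩ := h1
  obtain ⟨u2, w2, v2, d2, un2, p2, d2', un2'⟩ := h2
  let E : ℕ ≃ ℕ × ℕ := (Denumerable.eqv (ℕ × ℕ)).symm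
  have keymem : ∀ (s t : ℕ) (x : Fin m → ℝ),
      x ∈ HBox (fun j => max (u1 s j) (u2 t j - v1 s j))
        (fun j => min (w1 s j) (w2 t j - v1 s j))
      ↔ x ∈ HBox (u1 s) (w1 s) ∧ x + v1 s ∈ HBox (u2 t) (w2 t) := by
    intro s t x
    simp only [HBox, Set.mem_setOf_eq, max_le_iff, lt_min_iff, Pi.add_apply]
    constructor
    · intro h
      exact ⟨fun j => ⟨(h j).1.1, (h j).2.1⟩,
        fun j => ⟨by linarith [(h j).1.2], by linarith [(h j).2.2]⟩⟩
    · intro h j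
      exact ⟨⟨(h.1 j).1, by linarith [(h.2 j).1]⟩,
        ⟨(h.1 j).2, by linarith [(h.2 j).2]⟩⟩
  refine ⟨fun n j => max (u1 (E n).1 j) (u2 (E n).2 j - v1 (E n).1 j),
    fun n j => min (w1 (E n).1 j) (w2 (E n).2 j - v1 (E n).1 j),
    fun n => v1 (E n).1 + v2 (E n).2, ?_, ?_, ?_, ?_, ?_⟩
  · -- disjoint sources
    intro k k' hkk'
    have hE : E k ≠ E k' := fun h => hkk' (E.injective h)
    rw [Set.disjoint_left]
    intro x hx hx'
    rw [keymem] at hx hx'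
    rcases eq_or_ne (E k).1 (E k').1 with hs | hs
    · have ht : (E k).2 ≠ (E k').2 := fun h => hE (Prod.ext hs h)
      rw [hs] at hx
      exact Set.disjoint_left.mp (d2 _ _ ht) hx.2 hx'.2
    · exact Set.disjoint_left.mp (d1 _ _ hs) hx.1 hx'.1
  · -- union sources = P
    ext x
    simp only [Set.mem_iUnion]
    constructor
    · rintro ⟨n, hn⟩
      rw [keymem] at hn
      rw [← un1]
      exact Set.mem_iUnion.mpr ⟨(E n).1, hn.1⟩
    · intro hx
      rw [← un1] at hx
      obtain ⟨s, hs⟩ := Set.mem_iUnion.mp hx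
      have : x + v1 s ∈ Q := by
        rw [← un1']
        exact Set.mem_iUnion.mpr ⟨s, ⟨x, hs, rfl⟩⟩
      rw [← un2] at this
      obtain ⟨t, ht⟩ := Set.mem_iUnion.mp this
      refine ⟨E.symm (s, t), ?_⟩
      rw [keymem]
      simp only [Equiv.apply_symm_apply]
      exact ⟨hs, ht⟩
  · intro n
    rw [map_add, p1, p2, add_zero]
  · -- disjoint images
    intro k k' hkk'
    have hE : E k ≠ E k' := fun h => hkk' (E.injective h)
    rw [Set.disjoint_left]
    rintro x ⟨y, hy, rfl⟩ ⟨z, hz, hz2⟩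
    rw [keymem] at hy hz
    have hz2' : z + (v1 (E k').1 + v2 (E k').2) = y + (v1 (E k).1 + v2 (E k).2) := hz2
    have hass : ∀ (w : Fin m → ℝ) (s t : ℕ), w + (v1 s + v2 t) = (w + v1 s) + v2 t :=
      fun w s t => (add_assoc w (v1 s) (v2 t)).symm
    rcases eq_or_ne (E k).2 (E k').2 with ht | ht
    · have hs : (E k).1 ≠ (E k').1 := fun h => hE (Prod.ext h ht)
      have hyz : z + v1 (E k').1 = y + v1 (E k).1 := by
        have h := hz2'
        rw [hass, hass, ht] at h
        exact add_right_cancel h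
      have h1 : y + v1 (E k).1 ∈ (fun x => x + v1 (E k).1) '' HBox (u1 (E k).1) (w1 (E k).1) :=
        ⟨y, hy.1, rfl⟩
      have h2 : y + v1 (E k).1 ∈ (fun x => x + v1 (E k').1) '' HBox (u1 (E k').1) (w1 (E k').1) :=
        ⟨z, hz.1, hyz⟩
      exact Set.disjoint_left.mp (d1' _ _ hs) h1 h2
    · have h1 : y + (v1 (E k).1 + v2 (E k).2)
          ∈ (fun x => x + v2 (E k).2) '' HBox (u2 (E k).2) (w2 (E k).2) :=
        ⟨y + v1 (E k).1, hy.2, (hass y _ _).symm⟩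
      have h2 : y + (v1 (E k).1 + v2 (E k).2)
          ∈ (fun x => x + v2 (E k').2) '' HBox (u2 (E k').2) (w2 (E k').2) :=
        ⟨z + v1 (E k').1, hz.2, by show z + v1 (E k').1 + v2 (E k').2 = _; rw [← hass]; exact hz2'⟩
      exact Set.disjoint_left.mp (d2' _ _ ht) h1 h2
  · -- union images = R
    ext x
    simp only [Set.mem_iUnion]
    constructor
    · rintro ⟨n, y, hy, rfl⟩
      rw [keymem] at hy
      rw [← un2']
      exact Set.mem_iUnion.mpr ⟨(E n).2, ⟨y + v1 (E n).1, hy.2, (add_assoc _ _ _)⟩⟩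
    · intro hx
      rw [← un2'] at hx
      obtain ⟨t, z, hz, rfl⟩ := Set.mem_iUnion.mp hx
      have hzq : z ∈ Q := by rw [← un2]; exact Set.mem_iUnion.mpr ⟨t, hz⟩
      rw [← un1'] at hzq
      obtain ⟨s, y, hy, rfl⟩ := Set.mem_iUnion.mp hzq
      refine ⟨E.symm (s, t), y, ?_, ?_⟩
      · rw [keymem]; simp only [Equiv.apply_symm_apply]; exact ⟨hy, hz⟩
      · simp only [Equiv.apply_symm_apply]
        rw [add_assoc]

/-- One Euclid step on state (p, q, c, d). -/
noncomputable def euStep (s : ℝ × ℝ × ℝ × ℝ) : ℝ × ℝ × ℝ × ℝ :=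
  if s.2.2.2 ≤ s.2.2.1 then (s.1 + s.2.2.2, s.2.1, s.2.2.1 - s.2.2.2, s.2.2.2)
  else (s.1, s.2.1 + s.2.2.1, s.2.2.1, s.2.2.2 - s.2.2.1)

noncomputable def EuSt (A : ℝ) (n : ℕ) : ℝ × ℝ × ℝ × ℝ := euStep^[n] (0, 0, A, 1)

noncomputable def euP (A : ℝ) (n : ℕ) : ℝ := (EuSt A n).1
noncomputable def euQ (A : ℝ) (n : ℕ) : ℝ := (EuSt A n).2.1
noncomputable def euC (A : ℝ) (n : ℕ) : ℝ := (EuSt A n).2.2.1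
noncomputable def euD (A : ℝ) (n : ℕ) : ℝ := (EuSt A n).2.2.2

lemma eu_zero (A : ℝ) : euP A 0 = 0 ∧ euQ A 0 = 0 ∧ euC A 0 = A ∧ euD A 0 = 1 :=
  ⟨rfl, rfl, rfl, rfl⟩

lemma euSt_succ (A : ℝ) (n : ℕ) : EuSt A (n+1) = euStep (EuSt A n) :=
  Function.iterate_succ_apply' _ _ _

lemma eu_succ_le {A : ℝ} {n : ℕ} (h : euD A n ≤ euC A n) :
    euP A (n+1) = euP A n + euD A n ∧ euQ A (n+1) = euQ A n ∧
    euC A (n+1) = euC A n - euD A n ∧ euD A (n+1) = euD A n := by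
  rw [euD, euC] at h
  have hs : EuSt A (n+1) = ((EuSt A n).1 + (EuSt A n).2.2.2, (EuSt A n).2.1,
      (EuSt A n).2.2.1 - (EuSt A n).2.2.2, (EuSt A n).2.2.2) := by
    rw [euSt_succ, euStep, if_pos h]
  refine ⟨?_, ?_, ?_, ?_⟩ <;> simp [euP, euQ, euC, euD, hs]

lemma eu_succ_lt {A : ℝ} {n : ℕ} (h : euC A n < euD A n) :
    euP A (n+1) = euP A n ∧ euQ A (n+1) = euQ A n + euC A n ∧
    euC A (n+1) = euC A n ∧ euD A (n+1) = euD A n - euC A n := by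
  rw [euD, euC] at h
  have hs : EuSt A (n+1) = ((EuSt A n).1, (EuSt A n).2.1 + (EuSt A n).2.2.1,
      (EuSt A n).2.2.1, (EuSt A n).2.2.2 - (EuSt A n).2.2.1) := by
    rw [euSt_succ, euStep, if_neg (not_le.mpr h)]
  refine ⟨?_, ?_, ?_, ?_⟩ <;> simp [euP, euQ, euC, euD, hs]

lemma eu_inv {A : ℝ} (hA : 0 < A) (n : ℕ) :
    0 ≤ euP A n ∧ 0 ≤ euQ A n ∧ 0 ≤ euC A n ∧ 0 ≤ euD A n ∧
    euP A n + euC A n = A ∧ euQ A n + euD A n = 1 := by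
  induction n with
  | zero =>
    obtain ⟨h1, h2, h3, h4⟩ := eu_zero A
    rw [h1, h2, h3, h4]
    norm_num
    exact hA.le
  | succ n ih =>
    obtain ⟨hp, hq, hc, hd, hpc, hqd⟩ := ih
    rcases le_or_gt (euD A n) (euC A n) with h | h
    · obtain ⟨e1, e2, e3, e4⟩ := eu_succ_le h
      rw [e1, e2, e3, e4]
      refine ⟨by linarith, hq, by linarith, hd, by linarith, hqd⟩
    · obtain ⟨e1, e2, e3, e4⟩ := eu_succ_lt h
      rw [e1, e2, e3, e4]
      refine ⟨hp, by linarith, hc, by linarith, hpc, by linarith⟩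

lemma eu_decay {A : ℝ} (hA : 0 < A) {ε : ℝ} (hε : 0 < ε) :
    ∃ n, min (euC A n) (euD A n) < ε := by
  by_contra h
  push_neg at h
  have key : ∀ n : ℕ, euC A n + euD A n ≤ A + 1 - n * ε := by
    intro n
    induction n with
    | zero =>
      obtain ⟨_, _, h3, h4⟩ := eu_zero A
      rw [h3, h4]; push_cast; linarith
    | succ n ih =>
      have hmin := h n
      rcases le_or_gt (euD A n) (euC A n) with hle | hlt
      · obtain ⟨_, _, e3, e4⟩ := eu_succ_le hle
        rw [e3, e4]
        have : ε ≤ euD A n := le_trans hmin (min_le_right _ _)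
        push_cast; linarith
      · obtain ⟨_, _, e3, e4⟩ := eu_succ_lt hlt
        rw [e3, e4]
        have : ε ≤ euC A n := le_trans hmin (min_le_left _ _)
        push_cast; linarith
  obtain ⟨n, hn⟩ := exists_nat_gt ((A + 1) / ε)
  have h1 := key n
  have h2 := (eu_inv hA n).2.2.1
  have h3 := (eu_inv hA n).2.2.2.1
  have : A + 1 < n * ε := by
    rw [div_lt_iff₀ hε] at hn
    linarith
  linarith
noncomputable def euE (A : ℝ) (n : ℕ) : ℝ := min (euC A n) (euD A n)

variable {m : ℕ}

noncomputable def coreU (A B C : ℝ) (i k : Fin m) (n : ℕ) : Fin m → ℝ :=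
  fun j => if j = i then B * euP A n else if j = k then C * euQ A n else 0

noncomputable def coreWs (A B C : ℝ) (i k : Fin m) (g : Fin m → ℝ) (n : ℕ) : Fin m → ℝ :=
  fun j => if j = i then B * (euP A n + euE A n)
    else if j = k then C * (euQ A n + euE A n) else g j

noncomputable def coreWr (A B C : ℝ) (i k : Fin m) (g : Fin m → ℝ) : Fin m → ℝ :=
  fun j => if j = i then B * A else if j = k then C else g j

noncomputable def coreV (A B C : ℝ) (i k : Fin m) (n : ℕ) : Fin m → ℝ :=
  fun j => if j = i then B * (euQ A n - euP A n)
    else if j = k then -(C * (euQ A n - euP A n)) else 0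

noncomputable def coreU' (A B C : ℝ) (i k : Fin m) (n : ℕ) : Fin m → ℝ :=
  fun j => if j = i then B * euQ A n else if j = k then C * euP A n else 0

noncomputable def coreWs' (A B C : ℝ) (i k : Fin m) (g : Fin m → ℝ) (n : ℕ) : Fin m → ℝ :=
  fun j => if j = i then B * (euQ A n + euE A n)
    else if j = k then C * (euP A n + euE A n) else g j

noncomputable def coreWr' (A B C : ℝ) (i k : Fin m) (g : Fin m → ℝ) : Fin m → ℝ :=
  fun j => if j = i then B else if j = k then C * A else g j

/-- Source-side peeling: residual = square ⊔ next residual. -/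
lemma core_src (A B C : ℝ) (hA : 0 < A) (hB : 0 < B) (hC : 0 < C)
    (i k : Fin m) (hik : i ≠ k) (g : Fin m → ℝ) (n : ℕ) :
    HBox (coreU A B C i k n) (coreWr A B C i k g) =
      HBox (coreU A B C i k n) (coreWs A B C i k g n) ∪
      HBox (coreU A B C i k (n+1)) (coreWr A B C i k g) ∧
    Disjoint (HBox (coreU A B C i k n) (coreWs A B C i k g n))
      (HBox (coreU A B C i k (n+1)) (coreWr A B C i k g)) := by
  obtain ⟨hp0, hq0, hc0, hd0, hpc, hqd⟩ := eu_inv hA n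
  rcases le_or_gt (euD A n) (euC A n) with h | h
  · obtain ⟨e1, e2, e3, e4⟩ := eu_succ_le h
    have he : euE A n = euD A n := min_eq_right h
    set θ := B * (euP A n + euD A n) with hθ
    have h1 : coreU A B C i k n i ≤ θ := by
      simp only [coreU, if_pos rfl]
      have : euP A n ≤ euP A n + euD A n := by linarith
      exact mul_le_mul_of_nonneg_left this hB.le
    have h2 : θ ≤ coreWr A B C i k g i := by
      simp only [coreWr, if_pos rfl]
      have : euP A n + euD A n ≤ A := by linarith
      exact mul_le_mul_of_nonneg_left this hB.le
    have e_s : Function.update (coreWr A B C i k g) i θ = coreWs A B C i k g n := by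
      funext j
      rcases eq_or_ne j i with rfl | hj
      · rw [Function.update_self, hθ]
        simp [coreWs, he]
      · rw [Function.update_of_ne hj]
        rcases eq_or_ne j k with rfl | hj2
        · simp [coreWr, coreWs, hj, he, hqd]
        · simp [coreWr, coreWs, if_neg hj, if_neg hj2]
    have e_u : Function.update (coreU A B C i k n) i θ = coreU A B C i k (n+1) := by
      funext j
      rcases eq_or_ne j i with rfl | hj
      · rw [Function.update_self, hθ]; simp [coreU, e1]
      · rw [Function.update_of_ne hj]
        rcases eq_or_ne j k with rfl | hj2
        · simp [coreU, if_neg hj, e2]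
        · simp [coreU, if_neg hj, if_neg hj2]
    constructor
    · have := hbox_split_union (coreU A B C i k n) (coreWr A B C i k g) i θ h1 h2
      rw [e_s, e_u] at this; exact this
    · have := hbox_split_disjoint (coreU A B C i k n) (coreWr A B C i k g) i θ
      rw [e_s, e_u] at this; exact this
  · obtain ⟨e1, e2, e3, e4⟩ := eu_succ_lt h
    have he : euE A n = euC A n := min_eq_left h.le
    set θ := C * (euQ A n + euC A n) with hθ
    have h1 : coreU A B C i k n k ≤ θ := by
      simp only [coreU, if_neg hik.symm, if_pos rfl]
      have : euQ A n ≤ euQ A n + euC A n := by linarith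
      exact mul_le_mul_of_nonneg_left this hC.le
    have h2 : θ ≤ coreWr A B C i k g k := by
      simp only [coreWr, if_neg hik.symm, if_pos rfl]
      have hle : euQ A n + euC A n ≤ 1 := by linarith
      calc C * (euQ A n + euC A n) ≤ C * 1 := mul_le_mul_of_nonneg_left hle hC.le
        _ = C := mul_one C
    have e_s : Function.update (coreWr A B C i k g) k θ = coreWs A B C i k g n := by
      funext j
      rcases eq_or_ne j k with rfl | hj
      · rw [Function.update_self, hθ]
        simp [coreWs, Ne.symm hik, he]
      · rw [Function.update_of_ne hj]
        rcases eq_or_ne j i with rfl | hj2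
        · simp [coreWr, coreWs, he, hpc]
        · simp [coreWr, coreWs, if_neg hj, if_neg hj2]
    have e_u : Function.update (coreU A B C i k n) k θ = coreU A B C i k (n+1) := by
      funext j
      rcases eq_or_ne j k with rfl | hj
      · rw [Function.update_self, hθ]
        simp [coreU, Ne.symm hik, e2]
      · rw [Function.update_of_ne hj]
        rcases eq_or_ne j i with rfl | hj2
        · simp [coreU, e1, Ne.symm hik]
        · simp [coreU, if_neg hj, if_neg hj2]
    constructor
    · have := hbox_split_union (coreU A B C i k n) (coreWr A B C i k g) k θ h1 h2
      rw [e_s, e_u] at this; exact this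
    · have := hbox_split_disjoint (coreU A B C i k n) (coreWr A B C i k g) k θ
      rw [e_s, e_u] at this; exact this

/-- Target-side peeling. -/
lemma core_tgt (A B C : ℝ) (hA : 0 < A) (hB : 0 < B) (hC : 0 < C)
    (i k : Fin m) (hik : i ≠ k) (g : Fin m → ℝ) (n : ℕ) :
    HBox (coreU' A B C i k n) (coreWr' A B C i k g) =
      HBox (coreU' A B C i k n) (coreWs' A B C i k g n) ∪
      HBox (coreU' A B C i k (n+1)) (coreWr' A B C i k g) ∧
    Disjoint (HBox (coreU' A B C i k n) (coreWs' A B C i k g n))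
      (HBox (coreU' A B C i k (n+1)) (coreWr' A B C i k g)) := by
  obtain ⟨hp0, hq0, hc0, hd0, hpc, hqd⟩ := eu_inv hA n
  rcases le_or_gt (euD A n) (euC A n) with h | h
  · obtain ⟨e1, e2, e3, e4⟩ := eu_succ_le h
    have he : euE A n = euD A n := min_eq_right h
    set θ := C * (euP A n + euD A n) with hθ
    have h1 : coreU' A B C i k n k ≤ θ := by
      simp only [coreU', if_neg hik.symm, if_pos rfl]
      have : euP A n ≤ euP A n + euD A n := by linarith
      exact mul_le_mul_of_nonneg_left this hC.le
    have h2 : θ ≤ coreWr' A B C i k g k := by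
      simp only [coreWr', if_neg hik.symm, if_pos rfl]
      have : euP A n + euD A n ≤ A := by linarith
      exact mul_le_mul_of_nonneg_left this hC.le
    have e_s : Function.update (coreWr' A B C i k g) k θ = coreWs' A B C i k g n := by
      funext j
      rcases eq_or_ne j k with rfl | hj
      · rw [Function.update_self, hθ]
        simp [coreWs', Ne.symm hik, he]
      · rw [Function.update_of_ne hj]
        rcases eq_or_ne j i with rfl | hj2
        · simp [coreWr', coreWs', he, hqd]
        · simp [coreWr', coreWs', if_neg hj, if_neg hj2]
    have e_u : Function.update (coreU' A B C i k n) k θ = coreU' A B C i k (n+1) := by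
      funext j
      rcases eq_or_ne j k with rfl | hj
      · rw [Function.update_self, hθ]
        simp [coreU', Ne.symm hik, e1]
      · rw [Function.update_of_ne hj]
        rcases eq_or_ne j i with rfl | hj2
        · simp [coreU', e2, Ne.symm hik]
        · simp [coreU', if_neg hj, if_neg hj2]
    constructor
    · have := hbox_split_union (coreU' A B C i k n) (coreWr' A B C i k g) k θ h1 h2
      rw [e_s, e_u] at this; exact this
    · have := hbox_split_disjoint (coreU' A B C i k n) (coreWr' A B C i k g) k θ
      rw [e_s, e_u] at this; exact this
  · obtain ⟨e1, e2, e3, e4⟩ := eu_succ_lt h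
    have he : euE A n = euC A n := min_eq_left h.le
    set θ := B * (euQ A n + euC A n) with hθ
    have h1 : coreU' A B C i k n i ≤ θ := by
      simp only [coreU', if_pos rfl]
      have : euQ A n ≤ euQ A n + euC A n := by linarith
      exact mul_le_mul_of_nonneg_left this hB.le
    have h2 : θ ≤ coreWr' A B C i k g i := by
      simp only [coreWr', if_pos rfl]
      have hle : euQ A n + euC A n ≤ 1 := by linarith
      calc B * (euQ A n + euC A n) ≤ B * 1 := mul_le_mul_of_nonneg_left hle hB.le
        _ = B := mul_one B
    have e_s : Function.update (coreWr' A B C i k g) i θ = coreWs' A B C i k g n := by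
      funext j
      rcases eq_or_ne j i with rfl | hj
      · rw [Function.update_self, hθ]
        simp [coreWs', he]
      · rw [Function.update_of_ne hj]
        rcases eq_or_ne j k with rfl | hj2
        · simp [coreWr', coreWs', hj, he, hpc]
        · simp [coreWr', coreWs', if_neg hj, if_neg hj2]
    have e_u : Function.update (coreU' A B C i k n) i θ = coreU' A B C i k (n+1) := by
      funext j
      rcases eq_or_ne j i with rfl | hj
      · rw [Function.update_self, hθ]
        simp [coreU', e2]
      · rw [Function.update_of_ne hj]
        rcases eq_or_ne j k with rfl | hj2
        · simp [coreU', hj, e1]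
        · simp [coreU', if_neg hj, if_neg hj2]
    constructor
    · have := hbox_split_union (coreU' A B C i k n) (coreWr' A B C i k g) i θ h1 h2
      rw [e_s, e_u] at this; exact this
    · have := hbox_split_disjoint (coreU' A B C i k n) (coreWr' A B C i k g) i θ
      rw [e_s, e_u] at this; exact this

/-- The translated source square is the target square. -/
lemma core_translate (A B C : ℝ) (i k : Fin m) (hik : i ≠ k) (g : Fin m → ℝ) (n : ℕ) :
    (fun x => x + coreV A B C i k n) '' HBox (coreU A B C i k n) (coreWs A B C i k g n)
    = HBox (coreU' A B C i k n) (coreWs' A B C i k g n) := by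
  rw [hbox_translate]
  apply hbox_congr
  · intro j
    simp only [Pi.add_apply, coreU, coreV, coreU']
    rcases eq_or_ne j i with rfl | hj
    · simp only [if_pos rfl]; (try simp); (try ring)
    · rcases eq_or_ne j k with rfl | hj2
      · simp only [if_neg hj, if_pos rfl]; (try simp [hj]); (try ring)
      · simp only [if_neg hj, if_neg hj2]; (try simp); (try ring)
  · intro j
    simp only [Pi.add_apply, coreWs, coreV, coreWs']
    rcases eq_or_ne j i with rfl | hj
    · simp only [if_pos rfl]; (try simp); (try ring)
    · rcases eq_or_ne j k with rfl | hj2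
      · simp only [if_neg hj, if_pos rfl]; (try simp [hj]); (try ring)
      · simp only [if_neg hj, if_neg hj2]; (try simp); (try ring)
lemma core_equi {m : ℕ} (i k : Fin m) (hik : i ≠ k) (B C A : ℝ)
    (hB : 0 < B) (hC : 0 < C) (hA : 0 < A)
    (g g' : Fin m → ℝ)
    (hgi : g i = B * A) (hgk : g k = C) (hg'i : g' i = B) (hg'k : g' k = C * A)
    (hgg' : ∀ j, j ≠ i → j ≠ k → g' j = g j)
    (pi : (Fin m → ℝ) →ₗ[ℝ] ℝ)
    (hpi0 : pi (fun j => if j = i then B else if j = k then -C else 0) = 0) :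
    Equi pi (HBox 0 g) (HBox 0 g') := by
  have hsrc := fun n => core_src A B C hA hB hC i k hik g n
  have htgt := fun n => core_tgt A B C hA hB hC i k hik g n
  -- initial residuals
  have hR0 : HBox (coreU A B C i k 0) (coreWr A B C i k g) = HBox 0 g := by
    apply hbox_congr
    · intro j
      simp only [coreU, euP, euQ, EuSt, Function.iterate_zero, id]
      rcases eq_or_ne j i with rfl | hj
      · simp
      · rcases eq_or_ne j k with rfl | hj2
        · simp [hj]
        · simp [hj, hj2]
    · intro j
      simp only [coreWr]
      rcases eq_or_ne j i with rfl | hj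
      · simp [hgi]
      · rcases eq_or_ne j k with rfl | hj2
        · simp [hj, hgk]
        · simp [hj, hj2]
  have hR'0 : HBox (coreU' A B C i k 0) (coreWr' A B C i k g) = HBox 0 g' := by
    apply hbox_congr
    · intro j
      simp only [coreU', euP, euQ, EuSt, Function.iterate_zero, id]
      rcases eq_or_ne j i with rfl | hj
      · simp
      · rcases eq_or_ne j k with rfl | hj2
        · simp [hj]
        · simp [hj, hj2]
    · intro j
      simp only [coreWr']
      rcases eq_or_ne j i with rfl | hj
      · simp [hg'i]
      · rcases eq_or_ne j k with rfl | hj2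
        · simp [hj, hg'k]
        · simp [hj, hj2, hgg' j hj hj2]
  -- monotonicity of residuals
  have hmonoR : ∀ n, HBox (coreU A B C i k (n+1)) (coreWr A B C i k g) ⊆
      HBox (coreU A B C i k n) (coreWr A B C i k g) := by
    intro n; rw [(hsrc n).1]; exact Set.subset_union_right
  have hantiR : ∀ a b, a ≤ b → HBox (coreU A B C i k b) (coreWr A B C i k g) ⊆
      HBox (coreU A B C i k a) (coreWr A B C i k g) := by
    intro a b hab
    induction b, hab using Nat.le_induction with
    | base => exact subset_rfl
    | succ n hn ih => exact (hmonoR n).trans ih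
  have hSsubR : ∀ n, HBox (coreU A B C i k n) (coreWs A B C i k g n) ⊆
      HBox (coreU A B C i k n) (coreWr A B C i k g) := by
    intro n; rw [(hsrc n).1]; exact Set.subset_union_left
  have hmonoR' : ∀ n, HBox (coreU' A B C i k (n+1)) (coreWr' A B C i k g) ⊆
      HBox (coreU' A B C i k n) (coreWr' A B C i k g) := by
    intro n; rw [(htgt n).1]; exact Set.subset_union_right
  have hantiR' : ∀ a b, a ≤ b → HBox (coreU' A B C i k b) (coreWr' A B C i k g) ⊆
      HBox (coreU' A B C i k a) (coreWr' A B C i k g) := by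
    intro a b hab
    induction b, hab using Nat.le_induction with
    | base => exact subset_rfl
    | succ n hn ih => exact (hmonoR' n).trans ih
  have hSsubR' : ∀ n, HBox (coreU' A B C i k n) (coreWs' A B C i k g n) ⊆
      HBox (coreU' A B C i k n) (coreWr' A B C i k g) := by
    intro n; rw [(htgt n).1]; exact Set.subset_union_left
  -- exhaustion, source side
  have hcap : ∀ x, x ∈ HBox 0 g → (∀ n, x ∉ HBox (coreU A B C i k n) (coreWs A B C i k g n))
      → False := by
    intro x hx hnot
    have hall : ∀ n, x ∈ HBox (coreU A B C i k n) (coreWr A B C i k g) := by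
      intro n
      induction n with
      | zero => rw [hR0]; exact hx
      | succ n ih =>
        rw [(hsrc n).1] at ih
        rcases ih with h | h
        · exact absurd h (hnot n)
        · exact h
    have hxi : ∀ n, B * euP A n ≤ x i := by
      intro n
      have := (hall n) i
      simpa [coreU] using this.1
    have hxk : ∀ n, C * euQ A n ≤ x k := by
      intro n
      have := (hall n) k
      simpa [coreU, Ne.symm hik] using this.1
    have hxi' : x i < B * A := by
      have := (hall 0) i
      simpa [coreWr] using this.2
    have hxk' : x k < C := by
      have := (hall 0) k
      simpa [coreWr, Ne.symm hik] using this.2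
    have hε1 : 0 < (B * A - x i) / B := div_pos (by linarith) hB
    have hε2 : 0 < (C - x k) / C := div_pos (by linarith) hC
    obtain ⟨n, hn⟩ := eu_decay hA (lt_min hε1 hε2)
    obtain ⟨hp0, hq0, hc0, hd0, hpc, hqd⟩ := eu_inv hA n
    have h1 : (B * A - x i) / B ≤ euC A n := by
      rw [div_le_iff₀ hB]
      have := hxi n
      nlinarith
    have h2 : (C - x k) / C ≤ euD A n := by
      rw [div_le_iff₀ hC]
      have := hxk n
      nlinarith
    have : min ((B * A - x i) / B) ((C - x k) / C) ≤ min (euC A n) (euD A n) :=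
      le_min ((min_le_left _ _).trans h1) ((min_le_right _ _).trans h2)
    linarith
  -- exhaustion, target side
  have hcap' : ∀ x, x ∈ HBox 0 g' → (∀ n, x ∉ HBox (coreU' A B C i k n) (coreWs' A B C i k g n))
      → False := by
    intro x hx hnot
    have hall : ∀ n, x ∈ HBox (coreU' A B C i k n) (coreWr' A B C i k g) := by
      intro n
      induction n with
      | zero => rw [hR'0]; exact hx
      | succ n ih =>
        rw [(htgt n).1] at ih
        rcases ih with h | h
        · exact absurd h (hnot n)
        · exact h
    have hxi : ∀ n, B * euQ A n ≤ x i := by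
      intro n
      have := (hall n) i
      simpa [coreU'] using this.1
    have hxk : ∀ n, C * euP A n ≤ x k := by
      intro n
      have := (hall n) k
      simpa [coreU', Ne.symm hik] using this.1
    have hxi' : x i < B := by
      have := (hall 0) i
      simpa [coreWr'] using this.2
    have hxk' : x k < C * A := by
      have := (hall 0) k
      simpa [coreWr', Ne.symm hik] using this.2
    have hε1 : 0 < (C * A - x k) / C := div_pos (by linarith) hC
    have hε2 : 0 < (B - x i) / B := div_pos (by linarith) hB
    obtain ⟨n, hn⟩ := eu_decay hA (lt_min hε1 hε2)
    obtain ⟨hp0, hq0, hc0, hd0, hpc, hqd⟩ := eu_inv hA n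
    have h1 : (C * A - x k) / C ≤ euC A n := by
      rw [div_le_iff₀ hC]
      have := hxk n
      nlinarith
    have h2 : (B - x i) / B ≤ euD A n := by
      rw [div_le_iff₀ hB]
      have := hxi n
      nlinarith
    have : min ((C * A - x k) / C) ((B - x i) / B) ≤ min (euC A n) (euD A n) :=
      le_min ((min_le_left _ _).trans h1) ((min_le_right _ _).trans h2)
    linarith
  -- assemble
  refine ⟨coreU A B C i k, fun n => coreWs A B C i k g n, coreV A B C i k, ?_, ?_, ?_, ?_, ?_⟩
  · -- disjoint sources
    have key : ∀ n n', n < n' → Disjoint (HBox (coreU A B C i k n) (coreWs A B C i k g n))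
        (HBox (coreU A B C i k n') (coreWs A B C i k g n')) := by
      intro n n' h
      exact (hsrc n).2.mono_right (((hSsubR n').trans (hantiR (n+1) n' h)))
    intro n n' h
    rcases lt_or_gt_of_ne h with h' | h'
    · exact key n n' h'
    · exact (key n' n h').symm
  · -- union of sources
    ext x
    simp only [Set.mem_iUnion]
    constructor
    · rintro ⟨n, hn⟩
      rw [← hR0]
      exact hantiR 0 n (Nat.zero_le n) (hSsubR n hn)
    · intro hx
      by_contra hcon
      push_neg at hcon
      exact hcap x hx hcon
  · -- translations in ker pi
    intro n
    have : coreV A B C i k n = (euQ A n - euP A n) •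
        (fun j => if j = i then B else if j = k then -C else 0) := by
      funext j
      simp only [coreV, Pi.smul_apply, smul_eq_mul]
      split_ifs <;> ring
    rw [this, map_smul, hpi0, smul_zero]
  · -- disjoint images
    have key : ∀ n n', n < n' →
        Disjoint ((fun x => x + coreV A B C i k n) '' HBox (coreU A B C i k n) (coreWs A B C i k g n))
          ((fun x => x + coreV A B C i k n') '' HBox (coreU A B C i k n') (coreWs A B C i k g n')) := by
      intro n n' h
      rw [core_translate A B C i k hik g n, core_translate A B C i k hik g n']
      exact (htgt n).2.mono_right (((hSsubR' n').trans (hantiR' (n+1) n' h)))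
    intro n n' h
    rcases lt_or_gt_of_ne h with h' | h'
    · exact key n n' h'
    · exact (key n' n h').symm
  · -- union of images
    ext x
    simp only [Set.mem_iUnion]
    constructor
    · rintro ⟨n, hn⟩
      rw [core_translate A B C i k hik g n] at hn
      rw [← hR'0]
      exact hantiR' 0 n (Nat.zero_le n) (hSsubR' n hn)
    · intro hx
      by_contra hcon
      push_neg at hcon
      refine hcap' x hx fun n hn => hcon n ?_
      rw [core_translate A B C i k hik g n]
      exact hn
open Fin.NatCast in
noncomputable def ccoef {m : ℕ} [NeZero m] (a b : Fin m → ℝ) : ℕ → ℝ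
  | 0 => 1
  | s+1 => ccoef a b s * b (s : Fin m) / a ((s+1 : ℕ) : Fin m)

lemma ccoef_pos {m : ℕ} [NeZero m] {a b : Fin m → ℝ} (ha : ∀ j, 0 < a j)
    (hb : ∀ j, 0 < b j) : ∀ s, 0 < ccoef a b s := by
  intro s
  induction s with
  | zero => norm_num [ccoef]
  | succ s ih => exact div_pos (mul_pos ih (hb _)) (ha _)

noncomputable def piLM {m : ℕ} [NeZero m] (a b : Fin m → ℝ) : (Fin m → ℝ) →ₗ[ℝ] ℝ :=
  ∑ j : Fin m, ccoef a b j.val • (LinearMap.proj j : (Fin m → ℝ) →ₗ[ℝ] ℝ)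

lemma piLM_apply {m : ℕ} [NeZero m] (a b : Fin m → ℝ) (x : Fin m → ℝ) :
    piLM a b x = ∑ j : Fin m, ccoef a b j.val * x j := by
  simp [piLM, LinearMap.sum_apply, LinearMap.smul_apply, LinearMap.proj_apply, smul_eq_mul]

lemma piLM_single {m : ℕ} [NeZero m] (a b : Fin m → ℝ) (j0 : Fin m) (t : ℝ) :
    piLM a b (Pi.single j0 t) = ccoef a b j0.val * t := by
  rw [piLM_apply]
  rw [Finset.sum_eq_single j0]
  · simp
  · intro j _ hj
    rw [Pi.single_eq_of_ne hj, mul_zero]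
  · intro h
    exact absurd (Finset.mem_univ j0) h

open Fin.NatCast in
lemma chain {m : ℕ} [NeZero m] (a b : Fin m → ℝ) (ha : ∀ j, 0 < a j)
    (hb : ∀ j, 0 < b j) :
    ∀ (t l : ℕ), l + t + 1 = m → ∀ g : Fin m → ℝ, (∀ j, 0 < g j) →
    (∀ j : Fin m, j.val < l → g j = b j) → (∀ j : Fin m, l < j.val → g j = a j) →
    (∏ j, g j = ∏ j, b j) →
    Equi (piLM a b) (HBox 0 g) (HBox 0 b) := by
  intro t
  induction t with
  | zero =>
    intro l hl g hg hgb' hga hprod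
    have hm : 1 ≤ m := by omega
    set i : Fin m := ⟨l, by omega⟩ with hi
    have hgb : ∀ j, j ≠ i → g j = b j := by
      intro j hj
      refine hgb' j ?_
      have h1 : j.val < m := j.isLt
      have h2 : j.val ≠ l := fun h => hj (Fin.ext h)
      omega
    have hProdErase : ∏ j ∈ Finset.univ.erase i, g j = ∏ j ∈ Finset.univ.erase i, b j :=
      Finset.prod_congr rfl fun j hj => hgb j (Finset.mem_erase.mp hj).1
    have h1 : g i * ∏ j ∈ Finset.univ.erase i, g j = ∏ j, g j :=
      Finset.mul_prod_erase _ _ (Finset.mem_univ i)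
    have h2 : b i * ∏ j ∈ Finset.univ.erase i, b j = ∏ j, b j :=
      Finset.mul_prod_erase _ _ (Finset.mem_univ i)
    have hPpos : 0 < ∏ j ∈ Finset.univ.erase i, b j :=
      Finset.prod_pos fun j _ => hb j
    have hgi : g i = b i := by
      have := hprod
      rw [← h1, ← h2, hProdErase] at this
      exact mul_right_cancel₀ (ne_of_gt hPpos) this
    have : g = b := by
      funext j
      rcases eq_or_ne j i with rfl | hj
      · exact hgi
      · exact hgb j hj
    rw [this]
    exact equi_refl hm _ _ _
  | succ t ih =>
    intro l hl g hg hgb' hga hprod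
    have hlm : l + 1 < m := by omega
    set i : Fin m := ⟨l, by omega⟩ with hi
    set k : Fin m := ⟨l + 1, by omega⟩ with hk
    have hik : i ≠ k := by
      intro h
      have := congrArg Fin.val h
      simp [hi, hk] at this
    have hbi := hb i
    have hgk := hg k
    set g' : Fin m → ℝ :=
      Function.update (Function.update g i (b i)) k (g i * g k / b i) with hg'
    have hg'i : g' i = b i := by
      rw [hg', Function.update_of_ne hik, Function.update_self]
    have hg'k : g' k = g i * g k / b i := by
      rw [hg', Function.update_self]
    have hg'j : ∀ j, j ≠ i → j ≠ k → g' j = g j := by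
      intro j hj1 hj2
      rw [hg', Function.update_of_ne hj2, Function.update_of_ne hj1]
    have hg'pos : ∀ j, 0 < g' j := by
      intro j
      rcases eq_or_ne j i with rfl | hj1
      · rw [hg'i]; exact hb _
      · rcases eq_or_ne j k with rfl | hj2
        · rw [hg'k]; exact div_pos (mul_pos (hg i) hgk) hbi
        · rw [hg'j j hj1 hj2]; exact hg j
    have hka : g k = a k := hga k (by simp [hk])
    -- the kernel condition
    have hpi0 : piLM a b (fun j => if j = i then b i else if j = k then -(g k) else 0) = 0 := by
      have hvd : (fun j => if j = i then b i else if j = k then -(g k) else 0)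
          = Pi.single i (b i) + Pi.single k (-(g k)) := by
        funext j
        simp only [Pi.add_apply]
        rcases eq_or_ne j i with rfl | hj1
        · rw [if_pos rfl, Pi.single_eq_same, Pi.single_eq_of_ne hik, add_zero]
        · rcases eq_or_ne j k with rfl | hj2
          · rw [if_neg hj1, if_pos rfl, Pi.single_eq_of_ne hj1, Pi.single_eq_same, zero_add]
          · rw [if_neg hj1, if_neg hj2, Pi.single_eq_of_ne hj1, Pi.single_eq_of_ne hj2, add_zero]
      rw [hvd, map_add, piLM_single, piLM_single]
      have hcast1 : ((l : ℕ) : Fin m) = i := by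
        apply Fin.ext
        rw [Fin.val_cast_of_lt (by omega : l < m)]
      have hcast2 : (((l + 1 : ℕ)) : Fin m) = k := by
        apply Fin.ext
        rw [Fin.val_cast_of_lt (by omega : l + 1 < m)]
      have hcl : ccoef a b (l + 1) = ccoef a b l * b i / a k := by
        rw [ccoef, hcast1, hcast2]
      have hiv : i.val = l := rfl
      have hkv : k.val = l + 1 := rfl
      rw [hiv, hkv, hcl, hka]
      have hak : a k ≠ 0 := (ha k).ne'
      field_simp
      ring
    have hcore := core_equi i k hik (b i) (g k) (g i / b i) hbi hgk
      (div_pos (hg i) hbi) g g'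
      (by rw [← mul_div_assoc, mul_div_cancel_left₀ _ hbi.ne'])
      rfl hg'i (by rw [hg'k, mul_comm (g i) (g k), mul_div_assoc]) hg'j (piLM a b) hpi0
    -- product preserved
    have hprod' : ∏ j, g' j = ∏ j, b j := by
      have e1 : ∏ j, g' j = (g i * g k / b i) *
          ∏ j ∈ Finset.univ.erase k, Function.update g i (b i) j := by
        rw [hg']
        have := Finset.prod_update_of_mem (Finset.mem_univ k)
          (Function.update g i (b i)) (g i * g k / b i)
        rwa [Finset.sdiff_singleton_eq_erase] at this
      have hik' : i ∈ Finset.univ.erase k := Finset.mem_erase.mpr ⟨hik, Finset.mem_univ i⟩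
      have e2 : ∏ j ∈ Finset.univ.erase k, Function.update g i (b i) j
          = b i * ∏ j ∈ (Finset.univ.erase k).erase i, g j := by
        have := Finset.prod_update_of_mem hik' g (b i)
        rwa [Finset.sdiff_singleton_eq_erase] at this
      have e3 : g k * ∏ j ∈ Finset.univ.erase k, g j = ∏ j, g j :=
        Finset.mul_prod_erase _ _ (Finset.mem_univ k)
      have e4 : g i * ∏ j ∈ (Finset.univ.erase k).erase i, g j
          = ∏ j ∈ Finset.univ.erase k, g j :=
        Finset.mul_prod_erase _ _ hik'
      rw [← hprod, ← e3, ← e4, e1, e2]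
      field_simp
    refine equi_trans hcore (ih (l+1) (by omega) g' hg'pos ?_ ?_ hprod')
    · intro j hj
      rcases eq_or_ne j i with rfl | hj1
      · exact hg'i
      · have hjk : j ≠ k := by
          intro h
          subst h
          simp [hk] at hj
        have hjl : j.val < l := by
          have : j.val ≠ l := fun h => hj1 (Fin.ext h)
          have : j.val ≠ l + 1 := fun h => hjk (Fin.ext h)
          omega
        rw [hg'j j hj1 hjk]
        exact hgb' j hjl
    · intro j hj
      have hj1 : j ≠ i := by
        intro h; subst h; simp [hi] at hj
      have hj2 : j ≠ k := by
        intro h; subst h; simp [hk] at hj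
      rw [hg'j j hj1 hj2]
      exact hga j (by omega)
/-- two half-open boxes `P = [0,a_1)×⋯×[0,a_m)` and
`Q = [0,b_1)×⋯×[0,b_m)` of equal volume are approximately `Π`-congruent:
for some nonzero linear functional `π`, `P` can be cut into countably many
pairwise disjoint half-open boxes which, translated by vectors in
`ker π`, are pairwise disjoint with union `Q`. -/
theorem boxes_approx_Pi_congruent (m : ℕ) (hm : 1 ≤ m) (a b : Fin m → ℝ)
    (ha : ∀ j, 0 < a j) (hb : ∀ j, 0 < b j)
    (hvol : ∏ j, a j = ∏ j, b j) :
    ∃ pi : (Fin m → ℝ) →ₗ[ℝ] ℝ, pi ≠ 0 ∧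
    ∃ u w v : ℕ → Fin m → ℝ,
      (∀ k k' : ℕ, k ≠ k' →
        Disjoint (HBox (u k) (w k)) (HBox (u k') (w k'))) ∧
      (⋃ k, HBox (u k) (w k)) = HBox 0 a ∧
      (∀ k, pi (v k) = 0) ∧
      (∀ k k' : ℕ, k ≠ k' →
        Disjoint ((fun x => x + v k) '' HBox (u k) (w k))
          ((fun x => x + v k') '' HBox (u k') (w k'))) ∧
      (⋃ k, (fun x => x + v k) '' HBox (u k) (w k)) = HBox 0 b := by
  haveI : NeZero m := ⟨by omega⟩
  refine ⟨piLM a b, ?_, ?_⟩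
  · intro h
    have h0 : piLM a b (Pi.single (⟨0, hm⟩ : Fin m) (1:ℝ)) = 0 := by rw [h]; simp
    rw [piLM_single] at h0
    simp [ccoef] at h0
  · exact chain a b ha hb (m - 1) 0 (by omega) a ha
      (fun j hj => absurd hj (Nat.not_lt_zero _)) (fun j _ => rfl) hvol
end

section
/- Assume a ∼_φ b and that the graph G_φ is a path. Then for every n ≥ 1 and every λ ∈ 𝒜_n, every rewrite sequence from λ has length at most n·(log n + 1), where log denotes the natural logarithm. -/
open scoped BigOperators

/-- The size `|λ| = Σ_i i·m_i(λ)` of a partition, identified with its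
multiplicity function (a finitely supported function `ℕ+ →₀ ℕ`). -/
def psize (lam : ℕ+ →₀ ℕ) : ℕ := lam.sum fun i m => (i : ℕ) * m

/-- `λ ∈ 𝒜`: every multiplicity satisfies `m_i(λ) < a_i`
(automatic when `a_i = ∞`). -/
def InA (a : ℕ+ → ℕ∞) (lam : ℕ+ →₀ ℕ) : Prop := ∀ i, (lam i : ℕ∞) < a i

/-- `a ∼_φ b` : the sequences `a, b` take values in `{1,2,…} ∪ {∞}`,
`φ` is a bijection from `supp(a) = {i : a_i < ∞}` onto `supp(b) = {j : b_j < ∞}`,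
and `i·a_i = φ(i)·b_{φ(i)}` for all `i ∈ supp(a)`. -/
def PhiEquiv (a b : ℕ+ → ℕ∞) (phi : ℕ+ → ℕ+) : Prop :=
  (∀ i, a i ≠ 0) ∧ (∀ i, b i ≠ 0) ∧
  Set.BijOn phi {i | a i ≠ ⊤} {j | b j ≠ ⊤} ∧
  (∀ i, a i ≠ ⊤ → ((i : ℕ) : ℕ∞) * a i = ((phi i : ℕ) : ℕ∞) * b (phi i))

/-- One step `μ → μ'` of O'Hara's algorithm: for some `j ∈ supp(b)` with
`m_j(μ) ≥ b_j`, remove `b_j` parts equal to `j` and add `a_i` parts equal to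
`i`, where `i = φ⁻¹(j)`. -/
def OStep (a b : ℕ+ → ℕ∞) (phi : ℕ+ → ℕ+) (mu mu' : ℕ+ →₀ ℕ) : Prop :=
  ∃ i j : ℕ+, phi i = j ∧ a i ≠ ⊤ ∧ b j ≠ ⊤ ∧ b j ≤ (mu j : ℕ∞) ∧
    ∀ l, mu' l = mu l + (if l = i then (a i).toNat else 0)
                      - (if l = j then (b j).toNat else 0)

/-- The graph `G_φ` is a path: there are an interval `I ⊆ ℤ` and an
injective map `k ↦ i_k` from `I` onto `supp(a) ∪ supp(b)` with
`φ(i_{k+1}) = i_k` whenever `k, k+1 ∈ I`, and every element of `supp(a)`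
is of the form `i_k` with `k - 1 ∈ I`. -/
def IsPathGraph (a b : ℕ+ → ℕ∞) (phi : ℕ+ → ℕ+) : Prop :=
  ∃ (I : Set ℤ) (f : ℤ → ℕ+),
    I.OrdConnected ∧
    Set.InjOn f I ∧
    f '' I = {i | a i ≠ ⊤} ∪ {j | b j ≠ ⊤} ∧
    (∀ k, k ∈ I → k + 1 ∈ I → phi (f (k + 1)) = f k) ∧
    (∀ i : ℕ+, a i ≠ ⊤ → ∃ k ∈ I, f k = i ∧ k - 1 ∈ I)

open scoped Classical

/-- Auxiliary "height" of level `k`: sum of `1/m` over the part sizes `m ≤ n`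
occurring at levels `≤ k` of the path. -/
noncomputable def hfun (I : Set ℤ) (f : ℤ → ℕ+) (n : ℕ) (k : ℤ) : ℝ :=
  ∑ m ∈ Finset.Icc 1 n, if ∃ l ∈ I, l ≤ k ∧ ((f l : ℕ) = m) then (m : ℝ)⁻¹ else 0

lemma hfun_nonneg (I : Set ℤ) (f : ℤ → ℕ+) (n : ℕ) (k : ℤ) : 0 ≤ hfun I f n k := by
  refine Finset.sum_nonneg fun m _ => ?_
  split <;> positivity

lemma hfun_le (I : Set ℤ) (f : ℤ → ℕ+) (n : ℕ) (k : ℤ) :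
    hfun I f n k ≤ 1 + Real.log n := by
  have h1 : hfun I f n k ≤ ∑ m ∈ Finset.Icc 1 n, (m : ℝ)⁻¹ := by
    refine Finset.sum_le_sum fun m hm => ?_
    have : (0:ℝ) ≤ (m:ℝ)⁻¹ := by positivity
    split <;> simp [this]
  have h2 : ∑ m ∈ Finset.Icc 1 n, (m : ℝ)⁻¹ = ((harmonic n : ℚ) : ℝ) := by
    simp [harmonic_eq_sum_Icc, Rat.cast_sum]
  exact (h1.trans_eq h2).trans (harmonic_le_one_add_log n)

lemma hfun_succ (I : Set ℤ) (f : ℤ → ℕ+) (n : ℕ) (k : ℤ)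
    (hinj : Set.InjOn f I) (hk1 : k - 1 ∈ I) (hk : k ∈ I) (hfn : (f k : ℕ) ≤ n) :
    hfun I f n k = hfun I f n (k - 1) + ((f k : ℕ) : ℝ)⁻¹ := by
  have hmem : (f k : ℕ) ∈ Finset.Icc 1 n := Finset.mem_Icc.2 ⟨(f k).pos, hfn⟩
  have key : ∀ m ∈ Finset.Icc 1 n,
      (if ∃ l ∈ I, l ≤ k ∧ ((f l : ℕ) = m) then (m : ℝ)⁻¹ else 0)
      = (if ∃ l ∈ I, l ≤ k - 1 ∧ ((f l : ℕ) = m) then (m : ℝ)⁻¹ else 0)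
        + (if m = (f k : ℕ) then (m : ℝ)⁻¹ else 0) := by
    intro m _
    by_cases hm : m = (f k : ℕ)
    · subst hm
      rw [if_pos ⟨k, hk, le_refl k, rfl⟩, if_pos rfl, if_neg, zero_add]
      rintro ⟨l, hl, hlk, hfl⟩
      have hfl' : f l = f k := PNat.coe_injective hfl
      have := hinj hl hk hfl'
      omega
    · rw [if_neg hm, add_zero]
      refine if_congr ⟨?_, ?_⟩ rfl rfl
      · rintro ⟨l, hl, hlk, hfl⟩
        refine ⟨l, hl, ?_, hfl⟩
        rcases eq_or_lt_of_le hlk with rfl | hlt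
        · exact absurd hfl.symm hm
        · omega
      · rintro ⟨l, hl, hlk, hfl⟩
        exact ⟨l, hl, by omega, hfl⟩
  rw [hfun, Finset.sum_congr rfl key, Finset.sum_add_distrib,
    Finset.sum_ite_eq' _ ((f k : ℕ)) (fun m => (m : ℝ)⁻¹), if_pos hmem]
  rfl

/-- The height of a part size: height of its level on the path, `0` off the path. -/
noncomputable def gfun (I : Set ℤ) (f : ℤ → ℕ+) (n : ℕ) (i : ℕ+) : ℝ :=
  if i ∈ f '' I then hfun I f n (Function.invFunOn f I i) else 0

lemma gfun_nonneg (I : Set ℤ) (f : ℤ → ℕ+) (n : ℕ) (i : ℕ+) : 0 ≤ gfun I f n i := by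
  rw [gfun]; split
  · exact hfun_nonneg _ _ _ _
  · exact le_rfl

lemma gfun_le (I : Set ℤ) (f : ℤ → ℕ+) (n : ℕ) (hn : 1 ≤ n) (i : ℕ+) :
    gfun I f n i ≤ 1 + Real.log n := by
  have hlog : 0 ≤ Real.log n := Real.log_nonneg (by exact_mod_cast hn)
  rw [gfun]; split
  · exact hfun_le _ _ _ _
  · linarith

/-- The potential function. -/
noncomputable def psi (I : Set ℤ) (f : ℤ → ℕ+) (n : ℕ) (mu : ℕ+ →₀ ℕ) : ℝ :=
  ∑ l ∈ mu.support, ((l : ℕ) : ℝ) * (mu l : ℝ) * gfun I f n l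

lemma psize_eq (mu : ℕ+ →₀ ℕ) (s : Finset ℕ+) (hs : mu.support ⊆ s) :
    psize mu = ∑ l ∈ s, (l : ℕ) * mu l := by
  rw [psize, Finsupp.sum]
  exact Finset.sum_subset hs fun x _ hx => by
    simp [Finsupp.notMem_support_iff.1 hx]

lemma psi_eq (I : Set ℤ) (f : ℤ → ℕ+) (n : ℕ) (mu : ℕ+ →₀ ℕ) (s : Finset ℕ+)
    (hs : mu.support ⊆ s) :
    psi I f n mu = ∑ l ∈ s, ((l : ℕ) : ℝ) * (mu l : ℝ) * gfun I f n l := by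
  rw [psi]
  exact Finset.sum_subset hs fun x _ hx => by
    simp [Finsupp.notMem_support_iff.1 hx]

lemma sum_shift_nat (s : Finset ℕ+) (ν : ℕ+ →₀ ℕ) (c : ℕ+) (v : ℕ) (hc : c ∈ s) :
    ∑ l ∈ s, (l : ℕ) * (ν l + if l = c then v else 0)
      = (∑ l ∈ s, (l : ℕ) * ν l) + (c : ℕ) * v := by
  simp only [mul_add, mul_ite, mul_zero]
  rw [Finset.sum_add_distrib, Finset.sum_ite_eq' s c (fun l => (l : ℕ) * v), if_pos hc]

lemma sum_shift_real (s : Finset ℕ+) (g : ℕ+ → ℝ) (ν : ℕ+ →₀ ℕ) (c : ℕ+) (v : ℕ)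
    (hc : c ∈ s) :
    ∑ l ∈ s, ((l : ℕ) : ℝ) * ((ν l : ℝ) + if l = c then (v : ℝ) else 0) * g l
      = (∑ l ∈ s, ((l : ℕ) : ℝ) * (ν l : ℝ) * g l) + ((c : ℕ) : ℝ) * (v : ℝ) * g c := by
  have key : ∀ l ∈ s, ((l : ℕ) : ℝ) * ((ν l : ℝ) + if l = c then (v : ℝ) else 0) * g l
      = ((l : ℕ) : ℝ) * (ν l : ℝ) * g l
        + (if l = c then ((l : ℕ) : ℝ) * (v : ℝ) * g l else 0) := by
    intro l _
    split_ifs with h <;> ring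
  rw [Finset.sum_congr rfl key, Finset.sum_add_distrib,
    Finset.sum_ite_eq' s c (fun l => ((l : ℕ) : ℝ) * (v : ℝ) * g l), if_pos hc]

lemma ostep_key (a b : ℕ+ → ℕ∞) (phi : ℕ+ → ℕ+) (h : PhiEquiv a b phi)
    (I : Set ℤ) (f : ℤ → ℕ+) (hinj : Set.InjOn f I)
    (hphiI : ∀ k, k ∈ I → k + 1 ∈ I → phi (f (k + 1)) = f k)
    (hsuppA : ∀ i : ℕ+, a i ≠ ⊤ → ∃ k ∈ I, f k = i ∧ k - 1 ∈ I)
    (n : ℕ) (mu mu' : ℕ+ →₀ ℕ) (hstep : OStep a b phi mu mu')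
    (hn' : psize mu = n) :
    psize mu' = n ∧ psi I f n mu + 1 ≤ psi I f n mu' := by
  obtain ⟨ha0, hb0, _hbij, hrel⟩ := h
  obtain ⟨i, j, hij, hai, hbj, hble, hmu'⟩ := hstep
  set ai := (a i).toNat with hai_def
  set bj := (b j).toNat with hbj_def
  have hai1 : 1 ≤ ai := by
    have h0 : ai ≠ 0 := by
      simp only [hai_def, ne_eq, ENat.toNat_eq_zero]
      push_neg
      exact ⟨ha0 i, hai⟩
    omega
  have hbj1 : 1 ≤ bj := by
    have h0 : bj ≠ 0 := by
      simp only [hbj_def, ne_eq, ENat.toNat_eq_zero]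
      push_neg
      exact ⟨hb0 j, hbj⟩
    omega
  have hblen : bj ≤ mu j := by
    have : ((bj : ℕ) : ℕ∞) ≤ (mu j : ℕ∞) := by
      rw [hbj_def, ENat.coe_toNat hbj]; exact hble
    exact_mod_cast this
  have hw : (i : ℕ) * ai = (j : ℕ) * bj := by
    have hr := hrel i hai
    rw [hij] at hr
    have hA : a i = ((ai : ℕ) : ℕ∞) := (ENat.coe_toNat hai).symm
    have hB : b j = ((bj : ℕ) : ℕ∞) := (ENat.coe_toNat hbj).symm
    rw [hA, hB] at hr
    have : (((i : ℕ) * ai : ℕ) : ℕ∞) = (((j : ℕ) * bj : ℕ) : ℕ∞) := by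
      push_cast
      exact_mod_cast hr
    exact_mod_cast this
  have hpt : ∀ l, mu' l + (if l = j then bj else 0) = mu l + (if l = i then ai else 0) := by
    intro l
    have h1 := hmu' l
    by_cases hlj : l = j <;> by_cases hli : l = i
    · have hij2 : i = j := hli.symm.trans hlj
      have hw' : (j : ℕ) * ai = (j : ℕ) * bj := by rw [← hij2] at hw ⊢; exact hw
      have hab : ai = bj := Nat.eq_of_mul_eq_mul_left j.pos hw'
      rw [if_pos hli, if_pos hlj] at h1
      rw [if_pos hlj, if_pos hli]
      have hl : bj ≤ mu l := by rw [hlj]; exact hblen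
      omega
    · rw [if_neg hli, if_pos hlj] at h1
      rw [if_pos hlj, if_neg hli]
      have hl : bj ≤ mu l := by rw [hlj]; exact hblen
      omega
    · rw [if_pos hli, if_neg hlj] at h1
      rw [if_neg hlj, if_pos hli]
      omega
    · rw [if_neg hli, if_neg hlj] at h1
      rw [if_neg hlj, if_neg hli]
      omega
  -- the common index set
  set s : Finset ℕ+ := (mu.support ∪ mu'.support) ∪ {i, j} with hs_def
  have hss : mu.support ⊆ s := by
    intro x hx; simp [hs_def, hx]
  have hss' : mu'.support ⊆ s := by
    intro x hx; simp [hs_def, hx]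
  have his : i ∈ s := by simp [hs_def]
  have hjs : j ∈ s := by simp [hs_def]
  -- size invariance
  have e1 : psize mu' + (j : ℕ) * bj = psize mu + (i : ℕ) * ai := by
    rw [psize_eq mu' s hss', psize_eq mu s hss, ← sum_shift_nat s mu' j bj hjs,
      ← sum_shift_nat s mu i ai his]
    exact Finset.sum_congr rfl fun l _ => by rw [hpt l]
  have hpsize' : psize mu' = n := by omega
  -- path facts
  obtain ⟨kk, hkI, hfk, hk1I⟩ := hsuppA i hai
  have hkk : kk - 1 + 1 = kk := by omega
  have hji : j = f (kk - 1) := by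
    have h5 := hphiI (kk - 1) hk1I (by rw [hkk]; exact hkI)
    rw [hkk, hfk, hij] at h5
    exact h5
  have hiim : i ∈ f '' I := ⟨kk, hkI, hfk⟩
  have hjim : j ∈ f '' I := ⟨kk - 1, hk1I, hji.symm⟩
  have hgi : gfun I f n i = hfun I f n kk := by
    rw [gfun, if_pos hiim]
    congr 1
    refine hinj (Function.invFunOn_mem ⟨kk, hkI, hfk⟩) hkI ?_
    rw [Function.invFunOn_eq ⟨kk, hkI, hfk⟩, hfk]
  have hgj : gfun I f n j = hfun I f n (kk - 1) := by
    rw [gfun, if_pos hjim]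
    congr 1
    refine hinj (Function.invFunOn_mem ⟨kk - 1, hk1I, hji.symm⟩) hk1I ?_
    rw [Function.invFunOn_eq ⟨kk - 1, hk1I, hji.symm⟩, hji]
  -- i ≤ n
  have hmui : 1 ≤ mu' i := by
    rcases eq_or_ne i j with heq | hne
    · have hw' : (j : ℕ) * ai = (j : ℕ) * bj := by rw [← heq] at hw ⊢; exact hw
      have hab : ai = bj := Nat.eq_of_mul_eq_mul_left j.pos hw'
      have h1 := hpt i
      rw [if_pos heq, if_pos rfl] at h1
      have hl : bj ≤ mu i := by rw [heq]; exact hblen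
      omega
    · have h1 := hpt i
      rw [if_neg hne, if_pos rfl] at h1
      omega
  have hin : (i : ℕ) ≤ n := by
    have hsup : i ∈ mu'.support := Finsupp.mem_support_iff.2 (by omega)
    have h2 : (i : ℕ) * mu' i ≤ psize mu' := by
      rw [psize, Finsupp.sum]
      exact Finset.single_le_sum (f := fun l : ℕ+ => (l : ℕ) * mu' l)
        (fun _ _ => Nat.zero_le _) hsup
    have h3 : (i : ℕ) ≤ (i : ℕ) * mu' i := Nat.le_mul_of_pos_right _ (by omega)
    omega
  have hgdiff : hfun I f n kk = hfun I f n (kk - 1) + ((i : ℕ) : ℝ)⁻¹ := by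
    have := hfun_succ I f n kk hinj hk1I hkI (by rw [hfk]; exact hin)
    rwa [hfk] at this
  -- potential change
  have e2 : psi I f n mu' + ((j : ℕ) : ℝ) * (bj : ℝ) * gfun I f n j
      = psi I f n mu + ((i : ℕ) : ℝ) * (ai : ℝ) * gfun I f n i := by
    rw [psi_eq I f n mu' s hss', psi_eq I f n mu s hss,
      ← sum_shift_real s (gfun I f n) mu' j bj hjs,
      ← sum_shift_real s (gfun I f n) mu i ai his]
    refine Finset.sum_congr rfl fun l _ => ?_
    have key := hpt l
    congr 1
    split_ifs at key ⊢ <;>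
      exact_mod_cast congrArg (fun t => (l : ℕ) * t) key
  have hi0 : ((i : ℕ) : ℝ) ≠ 0 := Nat.cast_ne_zero.2 i.pos.ne'
  have hww : ((j : ℕ) : ℝ) * (bj : ℝ) = ((i : ℕ) : ℝ) * (ai : ℝ) := by
    exact_mod_cast hw.symm
  rw [hgi, hgj, hgdiff] at e2
  have hx : ((i : ℕ) : ℝ) * (ai : ℝ) * (hfun I f n (kk - 1) + ((i : ℕ) : ℝ)⁻¹)
      = ((j : ℕ) : ℝ) * (bj : ℝ) * hfun I f n (kk - 1) + (ai : ℝ) := by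
    rw [hww]
    field_simp
  have hai1' : (1 : ℝ) ≤ (ai : ℝ) := by exact_mod_cast hai1
  exact ⟨hpsize', by linarith [e2, hx]⟩

/-- if `G_φ` is a path, then for every `n ≥ 1` and every
`λ ∈ 𝒜_n`, every rewrite sequence from `λ` has length at most
`n · (log n + 1)`. -/
theorem ohara_path_bound (a b : ℕ+ → ℕ∞) (phi : ℕ+ → ℕ+)
    (h : PhiEquiv a b phi) (hpath : IsPathGraph a b phi)
    (n : ℕ) (hn : 1 ≤ n) (lam : ℕ+ →₀ ℕ)
    (hlam : InA a lam) (hsize : psize lam = n)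
    (seq : ℕ → (ℕ+ →₀ ℕ)) (k : ℕ) (hseq0 : seq 0 = lam)
    (hseq : ∀ l < k, OStep a b phi (seq l) (seq (l + 1))) :
    (k : ℝ) ≤ n * (Real.log n + 1) := by
  obtain ⟨I, f, _hOC, hinj, _himg, hphiI, hsuppA⟩ := hpath
  have inv : ∀ l, l ≤ k → psize (seq l) = n ∧
      psi I f n lam + l ≤ psi I f n (seq l) := by
    intro l
    induction l with
    | zero => intro _; rw [hseq0]; exact ⟨hsize, by simp⟩
    | succ m ih =>
      intro hm
      have hm' : m < k := Nat.lt_of_succ_le hm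
      obtain ⟨h1, h2⟩ := ih (le_of_lt hm')
      obtain ⟨h3, h4⟩ := ostep_key a b phi h I f hinj hphiI hsuppA n (seq m)
        (seq (m + 1)) (hseq m hm') h1
      refine ⟨h3, ?_⟩
      push_cast
      push_cast at h2
      linarith
  obtain ⟨hpn, hpk⟩ := inv k le_rfl
  have hpsi0 : 0 ≤ psi I f n lam := by
    refine Finset.sum_nonneg fun l _ => ?_
    have h1 : (0:ℝ) ≤ ((l : ℕ) : ℝ) * ((lam l : ℕ) : ℝ) := by positivity
    exact mul_nonneg h1 (gfun_nonneg I f n l)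
  have hpsik : psi I f n (seq k) ≤ n * (Real.log n + 1) := by
    have hb : ∀ l ∈ (seq k).support,
        ((l : ℕ) : ℝ) * ((seq k) l : ℝ) * gfun I f n l
          ≤ ((l : ℕ) : ℝ) * ((seq k) l : ℝ) * (1 + Real.log n) := by
      intro l _
      exact mul_le_mul_of_nonneg_left (gfun_le I f n hn l) (by positivity)
    calc psi I f n (seq k)
        ≤ ∑ l ∈ (seq k).support, ((l : ℕ) : ℝ) * ((seq k) l : ℝ) * (1 + Real.log n) :=
          Finset.sum_le_sum hb
      _ = (∑ l ∈ (seq k).support, ((l : ℕ) : ℝ) * ((seq k) l : ℝ)) * (1 + Real.log n) := by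
          rw [← Finset.sum_mul]
      _ = ((psize (seq k) : ℕ) : ℝ) * (1 + Real.log n) := by
          rw [psize, Finsupp.sum]
          push_cast
          ring
      _ = n * (Real.log n + 1) := by rw [hpn]; ring
  linarith
end

section
/- Assume a ∼_φ b, that the graph G_φ is a path, and that D = Σ_{j ∈ supp(b)} 1/(j·b_j) converges (D < ∞). Then for every n ≥ 0 and every λ ∈ 𝒜_n, every rewrite sequence from λ has length at most D·n. -/
open scoped BigOperators

namespace OharaAux

open scoped ENNReal

noncomputable def tw (b : ℕ+ → ℕ∞) (j : ℕ+) : ℝ≥0∞ :=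
  if b j = ⊤ then 0 else (((j : ℕ) : ℝ≥0∞) * ((b j).toNat : ℝ≥0∞))⁻¹

noncomputable def cseq (b : ℕ+ → ℕ∞) (I : Set ℤ) (f : ℤ → ℕ+) (k : ℤ) : ℝ≥0∞ :=
  ∑' l : ℤ, Set.indicator {l : ℤ | l ∈ I ∧ k ≤ l} (fun l => tw b (f l)) l

open Classical in
noncomputable def gw (b : ℕ+ → ℕ∞) (I : Set ℤ) (f : ℤ → ℕ+) (j : ℕ+) : ℝ≥0∞ :=
  if h : ∃ k, k ∈ I ∧ f k = j then cseq b I f h.choose else 0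

noncomputable def Phi (b : ℕ+ → ℕ∞) (I : Set ℤ) (f : ℤ → ℕ+) (mu : ℕ+ →₀ ℕ) : ℝ≥0∞ :=
  ∑' j : ℕ+, gw b I f j * (((j : ℕ) : ℝ≥0∞) * (mu j : ℝ≥0∞))

variable {a b : ℕ+ → ℕ∞} {phi : ℕ+ → ℕ+} {I : Set ℤ} {f : ℤ → ℕ+}

lemma cseq_le (hinj : Set.InjOn f I) (k : ℤ) :
    cseq b I f k ≤ ∑' j : ℕ+, tw b j := by
  rw [cseq, ← tsum_subtype]
  exact ENNReal.tsum_comp_le_tsum_of_injective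
    (f := fun l : {l : ℤ | l ∈ I ∧ k ≤ l} => f l.1)
    (fun x y hxy => Subtype.ext (hinj x.2.1 y.2.1 hxy)) (tw b)

lemma gw_le (hinj : Set.InjOn f I) (j : ℕ+) : gw b I f j ≤ ∑' j : ℕ+, tw b j := by
  rw [gw]
  split_ifs
  · exact cseq_le hinj _
  · exact zero_le

lemma cseq_succ {k : ℤ} (hk : k ∈ I) :
    cseq b I f k = tw b (f k) + cseq b I f (k + 1) := by
  rw [cseq, cseq, show tw b (f k) = ∑' l : ℤ, (if l = k then tw b (f k) else 0) from
      (tsum_ite_eq k (fun _ => tw b (f k))).symm, ← ENNReal.tsum_add]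
  refine tsum_congr fun l => ?_
  by_cases hl : l = k
  · subst hl
    rw [Set.indicator_of_mem (show l ∈ {l' : ℤ | l' ∈ I ∧ l ≤ l'} from ⟨hk, le_refl l⟩),
      Set.indicator_of_notMem
        (show l ∉ {l' : ℤ | l' ∈ I ∧ l + 1 ≤ l'} by intro hc; exact absurd hc.2 (by omega)),
      if_pos rfl, add_zero]
  · have hiff : l ∈ {l : ℤ | l ∈ I ∧ k ≤ l} ↔ l ∈ {l : ℤ | l ∈ I ∧ k + 1 ≤ l} := by
      constructor <;> rintro ⟨h1, h2⟩ <;> exact ⟨h1, by omega⟩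
    rw [if_neg hl, zero_add]
    by_cases hc : l ∈ {l : ℤ | l ∈ I ∧ k ≤ l}
    · rw [Set.indicator_of_mem hc, Set.indicator_of_mem (hiff.mp hc)]
    · rw [Set.indicator_of_notMem hc, Set.indicator_of_notMem (fun hc' => hc (hiff.mpr hc'))]

lemma gw_eq (hinj : Set.InjOn f I) {k : ℤ} (hk : k ∈ I) :
    gw b I f (f k) = cseq b I f k := by
  have hp : ∃ k', k' ∈ I ∧ f k' = f k := ⟨k, hk, rfl⟩
  rw [gw, dif_pos hp]
  exact congrArg _ (hinj hp.choose_spec.1 hk hp.choose_spec.2)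

lemma tsum_size (mu : ℕ+ →₀ ℕ) :
    ∑' j : ℕ+, ((j : ℕ) : ℝ≥0∞) * (mu j : ℝ≥0∞) = ((psize mu : ℕ) : ℝ≥0∞) := by
  rw [tsum_eq_sum (s := mu.support)
    (fun j hj => by
      rw [Finsupp.notMem_support_iff.mp hj]
      simp)]
  rw [psize, Finsupp.sum]
  push_cast
  rfl

lemma phi_le (hinj : Set.InjOn f I) (mu : ℕ+ →₀ ℕ) :
    Phi b I f mu ≤ (∑' j : ℕ+, tw b j) * (psize mu : ℝ≥0∞) := by
  calc Phi b I f mu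
      ≤ ∑' j : ℕ+, (∑' j' : ℕ+, tw b j') * (((j : ℕ) : ℝ≥0∞) * (mu j : ℝ≥0∞)) :=
        ENNReal.tsum_le_tsum fun j => mul_le_mul_left (gw_le hinj j) _
    _ = (∑' j : ℕ+, tw b j) * (psize mu : ℝ≥0∞) := by
        rw [ENNReal.tsum_mul_left, tsum_size]

/-- Key step lemma: each O'Hara step decreases `Phi` by exactly `1`. -/
lemma step_phi (h : PhiEquiv a b phi)
    (hinj : Set.InjOn f I)
    (himg : f '' I = {i | a i ≠ ⊤} ∪ {j | b j ≠ ⊤})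
    (hedge : ∀ k, k ∈ I → k + 1 ∈ I → phi (f (k + 1)) = f k)
    (hlast : ∀ i : ℕ+, a i ≠ ⊤ → ∃ k ∈ I, f k = i ∧ k - 1 ∈ I)
    (hDfin : (∑' j : ℕ+, tw b j) ≠ ⊤)
    {mu mu' : ℕ+ →₀ ℕ} (hstep : OStep a b phi mu mu') :
    Phi b I f mu = Phi b I f mu' + 1 := by
  obtain ⟨i, j, hphi, ha, hb, hble, hmu'⟩ := hstep
  -- locate j on the path
  have hjimg : j ∈ f '' I := by rw [himg]; exact Or.inr hb
  obtain ⟨k, hkI, hfk⟩ := hjimg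
  -- locate i on the path, one step above
  obtain ⟨k', hk'I, hfk', hk'1⟩ := hlast i ha
  have hphik' : phi (f k') = f (k' - 1) := by
    have := hedge (k' - 1) hk'1 (by simpa using hk'I)
    simpa using this
  have hkk : k' - 1 = k := by
    apply hinj hk'1 hkI
    rw [← hphik', hfk', hphi, hfk]
  have hk1I : k + 1 ∈ I := by rw [← hkk]; simpa using hk'I
  have hfk1 : f (k + 1) = i := by rw [show k + 1 = k' by omega]; exact hfk'
  have hij : i ≠ j := by
    intro he
    have : k + 1 = k := hinj hk1I hkI (by rw [hfk1, hfk, he])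
    omega
  set A := (a i).toNat with hA
  set B := (b j).toNat with hB
  have hA1 : 1 ≤ A := by
    rcases Nat.eq_zero_or_pos A with h0 | h1
    · exfalso
      rcases (ENat.toNat_eq_zero).mp h0 with h' | h'
      · exact h.1 i h'
      · exact ha h'
    · exact h1
  have hB1 : 1 ≤ B := by
    rcases Nat.eq_zero_or_pos B with h0 | h1
    · exfalso
      rcases (ENat.toNat_eq_zero).mp h0 with h' | h'
      · exact h.2.1 j h'
      · exact hb h'
    · exact h1
  have hBle : B ≤ mu j := by
    have := ENat.toNat_le_toNat hble (by simp : ((mu j : ℕ∞)) ≠ ⊤)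
    simpa using this
  -- i·a_i = j·b_j as naturals
  have hnat : (i : ℕ) * A = (j : ℕ) * B := by
    have := h.2.2.2 i ha
    rw [hphi] at this
    rw [← ENat.coe_toNat ha, ← ENat.coe_toNat hb] at this
    exact_mod_cast this
  -- multiplicities
  have hmuj : mu' j = mu j - B := by
    have := hmu' j
    rw [if_neg (Ne.symm hij), if_pos rfl] at this
    simpa using this
  have hmui : mu' i = mu i + A := by
    have := hmu' i
    rw [if_pos rfl, if_neg hij] at this
    simpa using this
  have hmuo : ∀ l, l ≠ i → l ≠ j → mu' l = mu l := by
    intro l hli hlj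
    have := hmu' l
    rw [if_neg hli, if_neg hlj] at this
    simpa using this
  -- weights
  have hgj : gw b I f j = tw b j + gw b I f i := by
    rw [← hfk, gw_eq hinj hkI, cseq_succ hkI, ← hfk1, gw_eq hinj hk1I, hfk]
  have hgi_fin : gw b I f i * (((i : ℕ) : ℝ≥0∞) * (A : ℝ≥0∞)) ≠ ⊤ := by
    apply ENNReal.mul_ne_top
    · exact ne_top_of_le_ne_top hDfin (gw_le hinj i)
    · exact ENNReal.mul_ne_top (ENNReal.natCast_ne_top _) (ENNReal.natCast_ne_top _)
  have hone : tw b j * (((j : ℕ) : ℝ≥0∞) * (B : ℝ≥0∞)) = 1 := by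
    rw [tw, if_neg hb, ← hB]
    apply ENNReal.inv_mul_cancel
    · apply mul_ne_zero
      · exact Nat.cast_ne_zero.mpr j.pos.ne'
      · exact Nat.cast_ne_zero.mpr (by omega)
    · exact ENNReal.mul_ne_top (ENNReal.natCast_ne_top _) (ENNReal.natCast_ne_top _)
  -- termwise identity
  have key : ∀ l : ℕ+,
      gw b I f l * (((l : ℕ) : ℝ≥0∞) * (mu l : ℝ≥0∞))
        + (if l = i then gw b I f i * (((i : ℕ) : ℝ≥0∞) * (A : ℝ≥0∞)) else 0)
      = gw b I f l * (((l : ℕ) : ℝ≥0∞) * (mu' l : ℝ≥0∞))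
        + (if l = j then gw b I f j * (((j : ℕ) : ℝ≥0∞) * (B : ℝ≥0∞)) else 0) := by
    intro l
    by_cases hli : l = i
    · subst hli
      rw [if_pos rfl, if_neg hij, hmui, add_zero, ← mul_add, ← mul_add]
      congr 1
      push_cast
      ring
    · by_cases hlj : l = j
      · subst hlj
        rw [if_neg hli, if_pos rfl, add_zero, hmuj]
        have hcast : ((mu l : ℕ) : ℝ≥0∞) = ((mu l - B : ℕ) : ℝ≥0∞) + (B : ℝ≥0∞) := by
          exact_mod_cast congrArg (Nat.cast : ℕ → ℝ≥0∞) (Nat.sub_add_cancel hBle).symm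
        rw [hcast]; ring
      · rw [if_neg hli, if_neg hlj, hmuo l hli hlj]
  -- sum the identity
  have hsum : Phi b I f mu + gw b I f i * (((i : ℕ) : ℝ≥0∞) * (A : ℝ≥0∞))
      = Phi b I f mu' + gw b I f j * (((j : ℕ) : ℝ≥0∞) * (B : ℝ≥0∞)) := by
    rw [Phi, Phi, show gw b I f i * (((i : ℕ) : ℝ≥0∞) * (A : ℝ≥0∞)) = ∑' l : ℕ+,
          (if l = i then gw b I f i * (((i : ℕ) : ℝ≥0∞) * (A : ℝ≥0∞)) else 0) from
        (tsum_ite_eq i (fun _ => gw b I f i * (((i : ℕ) : ℝ≥0∞) * (A : ℝ≥0∞)))).symm,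
      show gw b I f j * (((j : ℕ) : ℝ≥0∞) * (B : ℝ≥0∞)) = ∑' l : ℕ+,
          (if l = j then gw b I f j * (((j : ℕ) : ℝ≥0∞) * (B : ℝ≥0∞)) else 0) from
        (tsum_ite_eq j (fun _ => gw b I f j * (((j : ℕ) : ℝ≥0∞) * (B : ℝ≥0∞)))).symm,
      ← ENNReal.tsum_add, ← ENNReal.tsum_add]
    exact tsum_congr key
  -- rewrite the j-term
  have hjterm : gw b I f j * (((j : ℕ) : ℝ≥0∞) * (B : ℝ≥0∞))
      = 1 + gw b I f i * (((i : ℕ) : ℝ≥0∞) * (A : ℝ≥0∞)) := by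
    rw [hgj, add_mul, hone]
    congr 1
    congr 1
    have : (((j : ℕ) * B : ℕ) : ℝ≥0∞) = (((i : ℕ) * A : ℕ) : ℝ≥0∞) := by rw [← hnat]
    push_cast at this
    rw [this]
  rw [hjterm] at hsum
  -- cancel the finite term
  have : Phi b I f mu + gw b I f i * (((i : ℕ) : ℝ≥0∞) * (A : ℝ≥0∞))
      = (Phi b I f mu' + 1) + gw b I f i * (((i : ℕ) : ℝ≥0∞) * (A : ℝ≥0∞)) := by
    rw [hsum]; ring
  exact ENNReal.add_left_inj hgi_fin |>.mp this

end OharaAux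

open scoped ENNReal

/-- if `G_φ` is a path and `D = Σ_{j ∈ supp(b)} 1/(j·b_j)`
converges, then for every `n` and every `λ ∈ 𝒜_n`, every rewrite sequence
from `λ` has length at most `D·n`. -/
theorem ohara_path_bound_summable (a b : ℕ+ → ℕ∞) (phi : ℕ+ → ℕ+)
    (h : PhiEquiv a b phi) (hpath : IsPathGraph a b phi)
    (hD : Summable fun j : ℕ+ =>
      if b j = ⊤ then (0 : ℝ) else ((j : ℝ) * ((b j).toNat : ℝ))⁻¹)
    (n : ℕ) (lam : ℕ+ →₀ ℕ) (hlam : InA a lam) (hsize : psize lam = n)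
    (seq : ℕ → (ℕ+ →₀ ℕ)) (k : ℕ) (hseq0 : seq 0 = lam)
    (hseq : ∀ l < k, OStep a b phi (seq l) (seq (l + 1))) :
    (k : ℝ) ≤ (∑' j : ℕ+,
      if b j = ⊤ then (0 : ℝ) else ((j : ℝ) * ((b j).toNat : ℝ))⁻¹) * n := by
  classical
  obtain ⟨I, f, _, hinj, himg, hedge, hlast⟩ := hpath
  set r : ℕ+ → ℝ := fun j => if b j = ⊤ then (0 : ℝ) else ((j : ℝ) * ((b j).toNat : ℝ))⁻¹
    with hr
  have hr_nonneg : ∀ j, 0 ≤ r j := by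
    intro j
    rw [hr]
    dsimp only
    split
    · exact le_refl 0
    · positivity
  -- identification of `tw` with `ofReal ∘ r`
  have htw : ∀ j, OharaAux.tw b j = ENNReal.ofReal (r j) := by
    intro j
    rw [OharaAux.tw, hr]
    dsimp only
    split
    · simp
    · rename_i hbj
      have hpos : (0 : ℝ) < (j : ℝ) * ((b j).toNat : ℝ) := by
        have hb1 : 1 ≤ (b j).toNat := by
          rcases Nat.eq_zero_or_pos (b j).toNat with h0 | h1
          · exact absurd ((ENat.toNat_eq_zero).mp h0) (by
              rintro (h' | h')
              · exact h.2.1 j h'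
              · exact hbj h')
          · exact h1
        have : (0 : ℝ) < (j : ℝ) := by exact_mod_cast j.pos
        have : (0 : ℝ) < ((b j).toNat : ℝ) := by exact_mod_cast hb1
        positivity
      rw [ENNReal.ofReal_inv_of_pos hpos, ENNReal.ofReal_mul (by positivity)]
      congr 1
      · congr 1
        · rw [show ((j : ℕ+) : ℝ) = (((j : ℕ) : ℕ) : ℝ) from rfl]
          rw [ENNReal.ofReal_natCast]
        · rw [ENNReal.ofReal_natCast]
  have hDof : (∑' j : ℕ+, OharaAux.tw b j) = ENNReal.ofReal (∑' j, r j) := by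
    rw [ENNReal.ofReal_tsum_of_nonneg hr_nonneg hD]
    exact tsum_congr htw
  have hDfin : (∑' j : ℕ+, OharaAux.tw b j) ≠ ⊤ := by
    rw [hDof]; exact ENNReal.ofReal_ne_top
  -- the chain identity
  have chain : ∀ l ≤ k, OharaAux.Phi b I f (seq l) + l = OharaAux.Phi b I f lam := by
    intro l hl
    induction l with
    | zero => simp [hseq0]
    | succ m ih =>
      have hm := ih (by omega)
      have hstep := OharaAux.step_phi h hinj himg hedge hlast hDfin (hseq m (by omega))
      rw [← hm, hstep]
      push_cast
      ring
  have hkle : (k : ℝ≥0∞) ≤ OharaAux.Phi b I f lam := by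
    have := chain k le_rfl
    calc (k : ℝ≥0∞) ≤ OharaAux.Phi b I f (seq k) + k := le_add_self
      _ = OharaAux.Phi b I f lam := this
  have hbound : (k : ℝ≥0∞) ≤ (∑' j : ℕ+, OharaAux.tw b j) * (n : ℝ≥0∞) := by
    refine hkle.trans ?_
    have := OharaAux.phi_le (b := b) hinj lam
    rwa [hsize] at this
  -- convert to reals
  rw [hDof] at hbound
  have hn : ((n : ℕ) : ℝ≥0∞) = ENNReal.ofReal (n : ℝ) := by
    rw [ENNReal.ofReal_natCast]
  have hk' : ((k : ℕ) : ℝ≥0∞) = ENNReal.ofReal (k : ℝ) := by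
    rw [ENNReal.ofReal_natCast]
  rw [hn, hk', ← ENNReal.ofReal_mul (tsum_nonneg hr_nonneg)] at hbound
  have := (ENNReal.ofReal_le_ofReal_iff
    (mul_nonneg (tsum_nonneg hr_nonneg) (Nat.cast_nonneg n))).mp hbound
  exact this
end

section
/- Assume a ∼_φ b and that only finitely many i ∈ supp(a) are φ-periodic with minimal period greater than 2 (i.e., the graph G_φ has only finitely many cycles of length > 2). Then there exists a constant C > 0 such that for every n ≥ 2 and every λ ∈ 𝒜_n, every rewrite sequence from λ has length at most C·n·log n (log the natural logarithm). -/
open scoped BigOperators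

/-- `i ∈ supp(a)` is `φ`-periodic with minimal period `r`: the iterates
`φ(i), …, φ^{r-1}(i)` all lie in `supp(a)`, `φ^r(i) = i`, and no smaller
positive power of `φ` returns `i` to itself.  (A cycle of `G_φ` of length
`r` is a `φ`-orbit of size `r`.) -/
def PhiPeriodic (a : ℕ+ → ℕ∞) (phi : ℕ+ → ℕ+) (i : ℕ+) (r : ℕ) : Prop :=
  0 < r ∧ a i ≠ ⊤ ∧
  (∀ s, 0 < s → s < r → a (phi^[s] i) ≠ ⊤) ∧
  phi^[r] i = i ∧
  (∀ s, 0 < s → s < r → phi^[s] i ≠ i)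

open Classical

section Aux
variable (a b : ℕ+ → ℕ∞) (phi : ℕ+ → ℕ+)

noncomputable def massOn (A : Set ℕ+) (mu : ℕ+ →₀ ℕ) : ℕ :=
  ∑ v ∈ mu.support, if v ∈ A then (v : ℕ) * mu v else 0

lemma massOn_eq_sum {A : Set ℕ+} {mu : ℕ+ →₀ ℕ} {s : Finset ℕ+} (hs : mu.support ⊆ s) :
    massOn A mu = ∑ v ∈ s, if v ∈ A then (v : ℕ) * mu v else 0 := by
  classical
  refine Finset.sum_subset hs ?_
  intro v _ hv
  simp [Finsupp.notMem_support_iff.mp hv]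

lemma single_le_massOn {A : Set ℕ+} {mu : ℕ+ →₀ ℕ} {v : ℕ+} (hv : v ∈ A) :
    (v : ℕ) * mu v ≤ massOn A mu := by
  classical
  by_cases h0 : mu v = 0
  · simp [h0]
  · have hvs : v ∈ mu.support := Finsupp.mem_support_iff.mpr h0
    calc (v:ℕ) * mu v = if v ∈ A then (v:ℕ) * mu v else 0 := by simp [hv]
    _ ≤ massOn A mu := Finset.single_le_sum (f := fun w => if w ∈ A then (w:ℕ) * mu w else 0)
        (fun w _ => by positivity) hvs

lemma massOn_singleton (v : ℕ+) (mu : ℕ+ →₀ ℕ) : massOn {v} mu = (v : ℕ) * mu v := by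
  classical
  rw [massOn_eq_sum (s := mu.support ∪ {v}) Finset.subset_union_left]
  simp only [Set.mem_singleton_iff]
  rw [Finset.sum_ite_eq' (mu.support ∪ {v}) v (fun w => (w:ℕ) * mu w)]
  simp

lemma massOn_mono {A B : Set ℕ+} (hAB : A ⊆ B) (mu : ℕ+ →₀ ℕ) :
    massOn A mu ≤ massOn B mu := by
  classical
  apply Finset.sum_le_sum
  intro v _
  by_cases hv : v ∈ A
  · simp [hv, hAB hv]
  · simp [hv]

lemma massOn_univ (mu : ℕ+ →₀ ℕ) : massOn Set.univ mu = psize mu := by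
  classical
  unfold massOn psize Finsupp.sum
  simp

lemma massOn_union_le (A B : Set ℕ+) (mu : ℕ+ →₀ ℕ) :
    massOn (A ∪ B) mu ≤ massOn A mu + massOn B mu := by
  classical
  unfold massOn
  rw [← Finset.sum_add_distrib]
  apply Finset.sum_le_sum
  intro x _
  by_cases hA : x ∈ A
  · by_cases hB : x ∈ B <;> simp [hA, hB, Set.mem_union]
  · by_cases hB : x ∈ B <;> simp [hA, hB, Set.mem_union]

lemma massOn_pair_le (v w : ℕ+) (mu : ℕ+ →₀ ℕ) :
    massOn {v, w} mu ≤ (v : ℕ) * mu v + (w : ℕ) * mu w := by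
  rw [(Set.insert_eq v {w} : ({v, w} : Set ℕ+) = {v} ∪ {w})]
  calc massOn ({v} ∪ {w}) mu ≤ massOn {v} mu + massOn {w} mu := massOn_union_le _ _ _
  _ = (v : ℕ) * mu v + (w : ℕ) * mu w := by rw [massOn_singleton, massOn_singleton]

lemma sum_single_le_psize (S : Finset ℕ+) (mu : ℕ+ →₀ ℕ) :
    ∑ v ∈ S, (v : ℕ) * mu v ≤ psize mu := by
  classical
  rw [← massOn_univ, massOn_eq_sum (s := mu.support ∪ S) Finset.subset_union_left]
  simp only [Set.mem_univ, if_true]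
  exact Finset.sum_le_sum_of_subset Finset.subset_union_right

end Aux

lemma massOn_step {a b : ℕ+ → ℕ∞} (A : Set ℕ+) (mu mu' : ℕ+ →₀ ℕ) (x j : ℕ+)
    (hNeq : (x:ℕ) * (a x).toNat = (j:ℕ) * (b j).toNat)
    (hble : (b j).toNat ≤ mu j)
    (hmu' : ∀ l, mu' l = mu l + (if l = x then (a x).toNat else 0)
        - (if l = j then (b j).toNat else 0)) :
    massOn A mu' + (if j ∈ A then (x:ℕ) * (a x).toNat else 0)
      = massOn A mu + (if x ∈ A then (x:ℕ) * (a x).toNat else 0) := by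
  classical
  set s : Finset ℕ+ := (mu.support ∪ mu'.support) ∪ {x, j} with hsdef
  have hs1 : mu.support ⊆ s := by
    intro v hv; simp [hsdef, Finset.mem_union, hv]
  have hs2 : mu'.support ⊆ s := by
    intro v hv; simp [hsdef, Finset.mem_union, hv]
  have hxs : x ∈ s := by simp [hsdef]
  have hjs : j ∈ s := by simp [hsdef]
  rw [massOn_eq_sum hs2, massOn_eq_sum hs1]
  have hj' : (if j ∈ A then (x:ℕ) * (a x).toNat else 0)
      = ∑ v ∈ s, if v = j then (if v ∈ A then (x:ℕ) * (a x).toNat else 0) else 0 := by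
    rw [Finset.sum_ite_eq' s j (fun v => if v ∈ A then (x:ℕ) * (a x).toNat else 0)]
    simp [hjs]
  have hx' : (if x ∈ A then (x:ℕ) * (a x).toNat else 0)
      = ∑ v ∈ s, if v = x then (if v ∈ A then (x:ℕ) * (a x).toNat else 0) else 0 := by
    rw [Finset.sum_ite_eq' s x (fun v => if v ∈ A then (x:ℕ) * (a x).toNat else 0)]
    simp [hxs]
  rw [hj', hx', ← Finset.sum_add_distrib, ← Finset.sum_add_distrib]
  apply Finset.sum_congr rfl
  intro v _
  have hv' := hmu' v
  by_cases hvA : v ∈ A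
  · simp only [hvA, if_true]
    by_cases hvx : v = x <;> by_cases hvj : v = j
    · have hxj : x = j := by rw [← hvx, ← hvj]
      have hab : (a x).toNat = (b j).toNat := by
        apply Nat.eq_of_mul_eq_mul_left x.pos
        rw [hNeq, hxj]
      have hmm : mu' v = mu v := by
        rw [hv', if_pos hvx, if_pos hvj, ← hab]; omega
      rw [hmm, if_pos hvx, if_pos hvj]
    · have hmm : mu' v = mu v + (a x).toNat := by
        rw [hv', if_pos hvx, if_neg hvj]; omega
      rw [hmm, if_pos hvx, if_neg hvj, hvx, Nat.mul_add]
      omega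
    · have hmm : mu' v = mu v - (b j).toNat := by
        rw [hv', if_neg hvx, if_pos hvj]; omega
      subst hvj
      rw [hmm, if_neg hvx, if_pos rfl, hNeq, ← Nat.mul_add, Nat.sub_add_cancel hble]
      omega
    · have hmm : mu' v = mu v := by
        rw [hv', if_neg hvx, if_neg hvj]; omega
      rw [hmm, if_neg hvx, if_neg hvj]
  · simp [hvA]

def NN (a : ℕ+ → ℕ∞) (x : ℕ+) : ℕ := (x:ℕ) * (a x).toNat

noncomputable def wsrc (a b : ℕ+ → ℕ∞) (phi : ℕ+ → ℕ+) (seq : ℕ → (ℕ+ →₀ ℕ)) (l : ℕ) : ℕ+ :=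
  if hl : OStep a b phi (seq l) (seq (l+1)) then hl.choose else 1

def cnt (w : ℕ → ℕ+) (i : ℕ+) (l : ℕ) : ℕ :=
  ((Finset.range l).filter (fun m => w m = i)).card

lemma cnt_succ (w : ℕ → ℕ+) (i : ℕ+) (l : ℕ) :
    cnt w i (l+1) = cnt w i l + (if w l = i then 1 else 0) := by
  classical
  unfold cnt
  rw [Finset.range_add_one, Finset.filter_insert]
  by_cases hw : w l = i
  · rw [if_pos hw, if_pos hw, Finset.card_insert_of_notMem (by simp)]
  · rw [if_neg hw, if_neg hw, Nat.add_zero]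

lemma cnt_pos_iff (w : ℕ → ℕ+) (i : ℕ+) (l : ℕ) :
    0 < cnt w i l ↔ ∃ m < l, w m = i := by
  classical
  unfold cnt
  rw [Finset.card_pos]
  constructor
  · rintro ⟨m, hm⟩
    simp only [Finset.mem_filter, Finset.mem_range] at hm
    exact ⟨m, hm.1, hm.2⟩
  · rintro ⟨m, hm1, hm2⟩
    exact ⟨m, by simp [Finset.mem_filter, Finset.mem_range, hm1, hm2]⟩

section Run

variable {a b : ℕ+ → ℕ∞} {phi : ℕ+ → ℕ+} {seq : ℕ → (ℕ+ →₀ ℕ)} {k : ℕ}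

lemma wsrc_spec (hl : OStep a b phi (seq l) (seq (l+1))) :
    a (wsrc a b phi seq l) ≠ ⊤ ∧ b (phi (wsrc a b phi seq l)) ≠ ⊤ ∧
    (b (phi (wsrc a b phi seq l))).toNat ≤ (seq l) (phi (wsrc a b phi seq l)) ∧
    (∀ v, (seq (l+1)) v = (seq l) v
        + (if v = wsrc a b phi seq l then (a (wsrc a b phi seq l)).toNat else 0)
        - (if v = phi (wsrc a b phi seq l) then (b (phi (wsrc a b phi seq l))).toNat else 0)) := by
  have hw : wsrc a b phi seq l = hl.choose := by
    unfold wsrc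
    rw [dif_pos hl]
  obtain ⟨j, hj, hax, hbj, hble, hfm⟩ := hl.choose_spec
  rw [hw, hj]
  have hble' : (b j).toNat ≤ (seq l) j := by
    have h1 : ((b j).toNat : ℕ∞) = b j := ENat.coe_toNat hbj
    have h2 : ((b j).toNat : ℕ∞) ≤ (((seq l) j : ℕ) : ℕ∞) := by rw [h1]; exact hble
    exact_mod_cast h2
  exact ⟨hax, hbj, hble', fun v => by rw [hfm v, ← hj]⟩

lemma Neq_toNat (h : PhiEquiv a b phi) {x : ℕ+} (hax : a x ≠ ⊤) :
    NN a x = ((phi x : ℕ+) : ℕ) * (b (phi x)).toNat := by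
  have he := h.2.2.2 x hax
  have hbx : b (phi x) ≠ ⊤ := h.2.2.1.mapsTo hax
  have h1 : (((x:ℕ) * (a x).toNat : ℕ) : ℕ∞) = (((phi x : ℕ) * (b (phi x)).toNat : ℕ) : ℕ∞) := by
    push_cast
    rw [ENat.coe_toNat hax, ENat.coe_toNat hbx]
    exact he
  exact_mod_cast h1

lemma NN_pos (h : PhiEquiv a b phi) {x : ℕ+} (hax : a x ≠ ⊤) : 0 < NN a x := by
  have h0 : a x ≠ 0 := h.1 x
  have : (a x).toNat ≠ 0 := by
    intro hc
    rcases (ENat.toNat_eq_zero).mp hc with h' | h'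
    · exact h0 h'
    · exact hax h'
  unfold NN
  exact Nat.mul_pos x.pos (Nat.pos_of_ne_zero this)

lemma run_massOn_step (h : PhiEquiv a b phi) (A : Set ℕ+) (l : ℕ)
    (hl : OStep a b phi (seq l) (seq (l+1))) :
    massOn A (seq (l+1)) + (if phi (wsrc a b phi seq l) ∈ A then NN a (wsrc a b phi seq l) else 0)
      = massOn A (seq l) + (if wsrc a b phi seq l ∈ A then NN a (wsrc a b phi seq l) else 0) := by
  obtain ⟨hax, hbj, hble, hfm⟩ := wsrc_spec hl
  exact massOn_step A (seq l) (seq (l+1)) (wsrc a b phi seq l) (phi (wsrc a b phi seq l))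
    (Neq_toNat h hax) hble hfm

lemma psize_inv (h : PhiEquiv a b phi) (hrun : ∀ l < k, OStep a b phi (seq l) (seq (l + 1))) :
    ∀ l ≤ k, psize (seq l) = psize (seq 0) := by
  intro l
  induction l with
  | zero => intro _; rfl
  | succ m ih =>
    intro hm
    have h1 := run_massOn_step h Set.univ m (hrun m (by omega))
    simp only [Set.mem_univ, if_true] at h1
    rw [massOn_univ, massOn_univ] at h1
    have := Nat.add_right_cancel h1
    rw [this]
    exact ih (by omega)

lemma run_point (hl : OStep a b phi (seq l) (seq (l+1))) (v : ℕ+)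
    (hv1 : v ≠ wsrc a b phi seq l) (hv2 : v ≠ phi (wsrc a b phi seq l)) :
    (seq (l+1)) v = (seq l) v := by
  obtain ⟨_, _, _, hfm⟩ := wsrc_spec hl
  rw [hfm v, if_neg hv1, if_neg hv2]
  omega

lemma run_gain (hl : OStep a b phi (seq l) (seq (l+1)))
    (hne : phi (wsrc a b phi seq l) ≠ wsrc a b phi seq l) :
    (seq (l+1)) (wsrc a b phi seq l) = (seq l) (wsrc a b phi seq l)
      + (a (wsrc a b phi seq l)).toNat := by
  obtain ⟨_, _, _, hfm⟩ := wsrc_spec hl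
  rw [hfm _, if_pos rfl, if_neg (by intro hc; exact hne hc.symm)]
  omega

lemma flow_bound (h : PhiEquiv a b phi) (hrun : ∀ l < k, OStep a b phi (seq l) (seq (l + 1)))
    (A : Set ℕ+) (i : ℕ+) (hiA : i ∉ A) (hphiA : phi i ∈ A)
    (hclosed : ∀ x, a x ≠ ⊤ → x ∈ A → phi x ∈ A) :
    ∀ l ≤ k, massOn A (seq l) + NN a i * cnt (wsrc a b phi seq) i l ≤ massOn A (seq 0) := by
  intro l
  induction l with
  | zero => intro _; simp [cnt]
  | succ m ih =>
    intro hm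
    have hlm : m < k := by omega
    have hstep := run_massOn_step h A m (hrun m hlm)
    set x := wsrc a b phi seq m with hx
    have hax : a x ≠ ⊤ := (wsrc_spec (hrun m hlm)).1
    rw [cnt_succ]
    by_cases hxi : x = i
    · -- x = i : i ∉ A, phi i ∈ A
      rw [if_pos hxi]
      rw [hxi] at hstep
      rw [if_pos hphiA, if_neg hiA] at hstep
      have : massOn A (seq (m+1)) + NN a i = massOn A (seq m) := by
        omega
      calc massOn A (seq (m+1)) + NN a i * (cnt (wsrc a b phi seq) i m + 1)
          = (massOn A (seq (m+1)) + NN a i) + NN a i * cnt (wsrc a b phi seq) i m := by ring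
        _ = massOn A (seq m) + NN a i * cnt (wsrc a b phi seq) i m := by rw [this]
        _ ≤ massOn A (seq 0) := ih (by omega)
    · rw [if_neg hxi, Nat.add_zero]
      have hle : massOn A (seq (m+1)) ≤ massOn A (seq m) := by
        by_cases hxA : x ∈ A
        · have : phi x ∈ A := hclosed x hax hxA
          rw [if_pos this, if_pos hxA] at hstep
          omega
        · rw [if_neg hxA] at hstep
          omega
      have h2 := ih (by omega)
      simp only [Nat.add_zero]
      omega

end Run

section Cycle

variable {a b : ℕ+ → ℕ∞} {phi : ℕ+ → ℕ+} {seq : ℕ → (ℕ+ →₀ ℕ)} {k : ℕ}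
variable {i0 : ℕ+} {r : ℕ}

/-- cnt is constant on an interval with no fires of `v`. -/
lemma cnt_const (w : ℕ → ℕ+) (v : ℕ+) {l1 l2 : ℕ} (hle : l1 ≤ l2)
    (hno : ∀ m, l1 ≤ m → m < l2 → w m ≠ v) : cnt w v l2 = cnt w v l1 := by
  induction l2 with
  | zero =>
    have h0 : l1 = 0 := by omega
    rw [h0]
  | succ m ih =>
    rcases Nat.lt_or_ge l1 (m+1) with hlt | hge
    · have hm : l1 ≤ m := by omega
      rw [cnt_succ, if_neg (hno m hm (by omega)), Nat.add_zero]
      exact ih hm (fun m' h1 h2 => hno m' h1 (by omega))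
    · have : l1 = m + 1 := by omega
      rw [this]

/-- node value constant on an interval where it is untouched. -/
lemma seq_const (hrun : ∀ l < k, OStep a b phi (seq l) (seq (l + 1))) (v : ℕ+)
    {l1 l2 : ℕ} (hle : l1 ≤ l2) (hk : l2 ≤ k)
    (hno : ∀ m, l1 ≤ m → m < l2 → wsrc a b phi seq m ≠ v ∧ phi (wsrc a b phi seq m) ≠ v) :
    (seq l2) v = (seq l1) v := by
  induction l2 with
  | zero => have : l1 = 0 := by omega
            rw [this]
  | succ m ih =>
    rcases Nat.lt_or_ge l1 (m+1) with hlt | hge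
    · have hm : l1 ≤ m := by omega
      have hstep := run_point (hrun m (by omega)) v
        (fun hc => (hno m hm (by omega)).1 (by rw [hc])) -- v = w m
        (fun hc => (hno m hm (by omega)).2 (by rw [hc]))
      rw [hstep]
      exact ih hm (by omega) (fun m' h1 h2 => hno m' h1 (by omega))
    · have : l1 = m + 1 := by omega
      rw [this]

variable (phi i0) in
def orb (s : ℕ) : ℕ+ := phi^[s] i0

lemma orb_succ (s : ℕ) : orb phi i0 (s+1) = phi (orb phi i0 s) := by
  unfold orb
  rw [Function.iterate_succ_apply']

lemma orb_add_r (hper : phi^[r] i0 = i0) (s : ℕ) :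
    orb phi i0 (s + r) = orb phi i0 s := by
  unfold orb
  rw [Function.iterate_add_apply, hper]

lemma orb_mod (hr : 0 < r) (hper : phi^[r] i0 = i0) (s : ℕ) :
    orb phi i0 s = orb phi i0 (s % r) := by
  induction s using Nat.strong_induction_on with
  | _ s ih =>
    rcases Nat.lt_or_ge s r with hlt | hge
    · rw [Nat.mod_eq_of_lt hlt]
    · have h1 : s = (s - r) + r := by omega
      rw [h1, orb_add_r hper, ih (s - r) (by omega)]
      congr 1
      exact (Nat.add_mod_right (s - r) r).symm

lemma orb_supp (hr : 0 < r) (hper : phi^[r] i0 = i0)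
    (hsupp : ∀ s < r, a (phi^[s] i0) ≠ ⊤) (s : ℕ) : a (orb phi i0 s) ≠ ⊤ := by
  rw [orb_mod hr hper]
  exact hsupp (s % r) (Nat.mod_lt _ hr)

lemma orb_ne (hr : 0 < r) (hper : phi^[r] i0 = i0)
    (hmin : ∀ s, 0 < s → s < r → phi^[s] i0 ≠ i0)
    (s d : ℕ) (hd0 : 0 < d) (hdr : d < r) : orb phi i0 (s + d) ≠ orb phi i0 s := by
  intro hc
  -- apply phi^[s*(r-1)] to both sides
  have key : ∀ t : ℕ, orb phi i0 (s + d + t) = orb phi i0 (s + t) := by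
    intro t
    have e1 : s + d + t = t + (s + d) := by omega
    have e2 : s + t = t + s := by omega
    unfold orb at hc ⊢
    rw [e1, e2, Function.iterate_add_apply phi t (s+d) i0,
      Function.iterate_add_apply phi t s i0, hc]
  have h2 := key (s * (r - 1))
  have hs1 : s + s * (r - 1) = s * r := by
    cases r with
    | zero => omega
    | succ r' => simp only [Nat.succ_sub_one, Nat.mul_succ]; omega
  rw [Nat.add_assoc, Nat.add_comm d _, ← Nat.add_assoc, hs1] at h2
  have h3 : orb phi i0 (s * r + d) = orb phi i0 d := by
    rw [orb_mod hr hper, orb_mod hr hper (s := d)]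
    congr 1
    exact Nat.mul_add_mod' s r d
  have h4 : orb phi i0 (s * r) = orb phi i0 0 := by
    rw [orb_mod hr hper]
    congr 1
    exact Nat.mul_mod_left s r
  rw [h3, h4] at h2
  exact hmin d hd0 hdr h2

end Cycle

section Cycle2

variable {a b : ℕ+ → ℕ∞} {phi : ℕ+ → ℕ+} {seq : ℕ → (ℕ+ →₀ ℕ)} {k : ℕ}
variable {i0 : ℕ+} {r : ℕ}

noncomputable def QQ (a b : ℕ+ → ℕ∞) (phi : ℕ+ → ℕ+) (seq : ℕ → (ℕ+ →₀ ℕ)) (i0 : ℕ+)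
    (s l : ℕ) : ℕ :=
  NN a (orb phi i0 s) * cnt (wsrc a b phi seq) (orb phi i0 s) l

noncomputable def KK (a : ℕ+ → ℕ∞) (phi : ℕ+ → ℕ+) (i0 : ℕ+) (r : ℕ) : ℕ :=
  ∏ s ∈ Finset.range r, NN a (orb phi i0 s)

lemma QQ_zero (s : ℕ) : QQ a b phi seq i0 s 0 = 0 := by
  unfold QQ cnt
  simp

lemma QQ_mod (hr : 0 < r) (hper : phi^[r] i0 = i0) (s l : ℕ) :
    QQ a b phi seq i0 s l = QQ a b phi seq i0 (s % r) l := by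
  unfold QQ
  rw [orb_mod hr hper]

lemma QQ_succ (hl : OStep a b phi (seq l) (seq (l+1))) (s : ℕ) :
    QQ a b phi seq i0 s (l+1) = QQ a b phi seq i0 s l
      + (if wsrc a b phi seq l = orb phi i0 s then NN a (orb phi i0 s) else 0) := by
  unfold QQ
  rw [cnt_succ, Nat.mul_add]
  congr 1
  by_cases hx : wsrc a b phi seq l = orb phi i0 s <;> simp [hx]

lemma NN_dvd_KK (hr : 0 < r) (hper : phi^[r] i0 = i0) (s : ℕ) :
    NN a (orb phi i0 s) ∣ KK a phi i0 r := by
  rw [orb_mod hr hper]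
  exact Finset.dvd_prod_of_mem _ (Finset.mem_range.mpr (Nat.mod_lt _ hr))

lemma NN_dvd_QQ (s l : ℕ) : NN a (orb phi i0 s) ∣ QQ a b phi seq i0 s l :=
  dvd_mul_right _ _

lemma u0_lt (hInA : InA a (seq 0)) (hr : 0 < r) (hper : phi^[r] i0 = i0)
    (hsupp : ∀ s < r, a (phi^[s] i0) ≠ ⊤) (s : ℕ) :
    (orb phi i0 s : ℕ) * (seq 0) (orb phi i0 s) < NN a (orb phi i0 s) := by
  set v := orb phi i0 s with hv
  have hax : a v ≠ ⊤ := orb_supp hr hper hsupp s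
  have h1 : (seq 0) v < (a v).toNat := by
    have h2 : (((seq 0) v : ℕ) : ℕ∞) < (((a v).toNat : ℕ) : ℕ∞) := by
      rw [ENat.coe_toNat hax]
      exact hInA v
    exact_mod_cast h2
  unfold NN
  have hv0 : 0 < (v:ℕ) := v.pos
  exact mul_lt_mul_of_pos_left h1 hv0

/-- Conservation at each cycle node. -/
lemma cons_cycle (h : PhiEquiv a b phi)
    (hrun : ∀ l < k, OStep a b phi (seq l) (seq (l + 1)))
    (hr : 0 < r) (hper : phi^[r] i0 = i0)
    (hsupp : ∀ s < r, a (phi^[s] i0) ≠ ⊤)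
    (hmin : ∀ s, 0 < s → s < r → phi^[s] i0 ≠ i0) (hr2 : 2 ≤ r) :
    ∀ s, ∀ l ≤ k,
      (orb phi i0 (s+1) : ℕ) * (seq l) (orb phi i0 (s+1)) + QQ a b phi seq i0 s l
        = (orb phi i0 (s+1) : ℕ) * (seq 0) (orb phi i0 (s+1)) + QQ a b phi seq i0 (s+1) l := by
  intro s l
  induction l with
  | zero => intro _; rw [QQ_zero, QQ_zero]
  | succ m ih =>
    intro hm
    have hl : OStep a b phi (seq m) (seq (m+1)) := hrun m (by omega)
    have hax : a (wsrc a b phi seq m) ≠ ⊤ := (wsrc_spec hl).1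
    have hstep := run_massOn_step h {orb phi i0 (s+1)} m hl
    rw [massOn_singleton, massOn_singleton] at hstep
    have hq1 := QQ_succ (i0 := i0) hl s
    have hq2 := QQ_succ (i0 := i0) hl (s+1)
    have ihm := ih (by omega)
    by_cases hc1 : wsrc a b phi seq m = orb phi i0 s
    · by_cases hc2 : wsrc a b phi seq m = orb phi i0 (s+1)
      · exfalso
        exact orb_ne hr hper hmin s 1 one_pos (by omega) (by rw [← hc2, hc1])
      · have hmem : phi (wsrc a b phi seq m) ∈ ({orb phi i0 (s+1)} : Set ℕ+) := by
          rw [Set.mem_singleton_iff, hc1]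
          exact (orb_succ s).symm
        have hnot : wsrc a b phi seq m ∉ ({orb phi i0 (s+1)} : Set ℕ+) :=
          fun hc => hc2 (Set.mem_singleton_iff.mp hc)
        rw [if_pos hmem, if_neg hnot, hc1] at hstep
        rw [if_pos hc1] at hq1
        rw [if_neg hc2] at hq2
        omega
    · by_cases hc2 : wsrc a b phi seq m = orb phi i0 (s+1)
      · have hmem : phi (wsrc a b phi seq m) ∉ ({orb phi i0 (s+1)} : Set ℕ+) := by
          intro hc
          rw [Set.mem_singleton_iff] at hc
          apply hc1
          apply h.2.2.1.injOn hax (orb_supp hr hper hsupp s)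
          rw [hc, orb_succ]
        have hpos2 : wsrc a b phi seq m ∈ ({orb phi i0 (s+1)} : Set ℕ+) :=
          Set.mem_singleton_iff.mpr hc2
        rw [if_neg hmem, if_pos hpos2, hc2] at hstep
        rw [if_neg hc1] at hq1
        rw [if_pos hc2] at hq2
        omega
      · have hmem : phi (wsrc a b phi seq m) ∉ ({orb phi i0 (s+1)} : Set ℕ+) := by
          intro hc
          rw [Set.mem_singleton_iff] at hc
          apply hc1
          apply h.2.2.1.injOn hax (orb_supp hr hper hsupp s)
          rw [hc, orb_succ]
        have hnot2 : wsrc a b phi seq m ∉ ({orb phi i0 (s+1)} : Set ℕ+) :=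
          fun hc => hc2 (Set.mem_singleton_iff.mp hc)
        rw [if_neg hmem, if_neg hnot2] at hstep
        rw [if_neg hc1] at hq1
        rw [if_neg hc2] at hq2
        omega

/-- The crossing lemma: shipped mass along any cycle edge never exceeds `KK`. -/
lemma crossing (h : PhiEquiv a b phi)
    (hrun : ∀ l < k, OStep a b phi (seq l) (seq (l + 1)))
    (hInA : InA a (seq 0))
    (hper : phi^[r] i0 = i0)
    (hsupp : ∀ s < r, a (phi^[s] i0) ≠ ⊤)
    (hmin : ∀ s, 0 < s → s < r → phi^[s] i0 ≠ i0) (hr2 : 2 ≤ r) :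
    ∀ l ≤ k, ∀ s, QQ a b phi seq i0 s l ≤ KK a phi i0 r := by
  have hr : 0 < r := by omega
  intro l
  induction l with
  | zero => intro _ s; rw [QQ_zero]; exact Nat.zero_le _
  | succ m ih =>
    intro hm s
    have hmk : m < k := by omega
    have hl : OStep a b phi (seq m) (seq (m+1)) := hrun m hmk
    have hq1 := QQ_succ (i0 := i0) hl s
    by_cases hx : wsrc a b phi seq m = orb phi i0 s
    · rw [if_pos hx] at hq1
      by_contra hgt
      push_neg at hgt
      -- then QQ s m = KK
      have hQsm : QQ a b phi seq i0 s m = KK a phi i0 r := by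
        have h1 := ih (by omega) s
        have h2 : KK a phi i0 r - QQ a b phi seq i0 s m < NN a (orb phi i0 s) := by omega
        have h3 : NN a (orb phi i0 s) ∣ (KK a phi i0 r - QQ a b phi seq i0 s m) :=
          Nat.dvd_sub (NN_dvd_KK hr hper s) (NN_dvd_QQ s m)
        have h4 := Nat.eq_zero_of_dvd_of_lt h3 h2
        omega
      -- all edges at level KK at time m
      have all_eq : ∀ d, QQ a b phi seq i0 (s + d) m = KK a phi i0 r := by
        intro d
        induction d with
        | zero => exact hQsm
        | succ d' ihd =>
          have hcons := cons_cycle h hrun hr hper hsupp hmin hr2 (s + d') m (by omega)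
          rw [ihd] at hcons
          have h1 := ih (by omega) (s + d' + 1)
          have h2 := u0_lt hInA hr hper hsupp (s + d' + 1)
          have h3 : NN a (orb phi i0 (s+d'+1)) ∣
              (KK a phi i0 r - QQ a b phi seq i0 (s+d'+1) m) :=
            Nat.dvd_sub (NN_dvd_KK hr hper _) (NN_dvd_QQ _ m)
          have h4 : KK a phi i0 r - QQ a b phi seq i0 (s+d'+1) m
              < NN a (orb phi i0 (s+d'+1)) := by omega
          have h5 := Nat.eq_zero_of_dvd_of_lt h3 h4
          have h6 : s + (d' + 1) = s + d' + 1 := by omega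
          rw [h6]
          omega
      have all_eq' : ∀ t, QQ a b phi seq i0 t m = KK a phi i0 r := by
        intro t
        have hd : (s + (t + (r - s % r))) % r = t % r := by
          have h5 := Nat.mod_add_div s r
          have h6 : s % r < r := Nat.mod_lt _ hr
          have h7 : s + (t + (r - s % r)) = t + r * (s / r) + r := by omega
          rw [h7, Nat.add_mod_right, Nat.add_mul_mod_self_left]
        calc QQ a b phi seq i0 t m = QQ a b phi seq i0 (t % r) m := QQ_mod hr hper t m
        _ = QQ a b phi seq i0 ((s + (t + (r - s % r))) % r) m := by rw [hd]
        _ = QQ a b phi seq i0 (s + (t + (r - s % r))) m := (QQ_mod hr hper _ m).symm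
        _ = KK a phi i0 r := all_eq _
      -- KK positive, so the cycle fired before m
      have hKpos : 0 < KK a phi i0 r := by
        unfold KK
        apply Finset.prod_pos
        intro t _
        exact NN_pos h (orb_supp hr hper hsupp t)
      have hcntpos : 0 < cnt (wsrc a b phi seq) (orb phi i0 s) m := by
        by_contra hc
        push_neg at hc
        have : cnt (wsrc a b phi seq) (orb phi i0 s) m = 0 := by omega
        have := hQsm
        unfold QQ at this
        rw [‹cnt _ _ m = 0›] at this
        omega
      obtain ⟨m0, hm0, hwm0⟩ := (cnt_pos_iff _ _ _).mp hcntpos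
      -- the finset of cycle firing times before m
      classical
      set P : Finset ℕ := (Finset.range m).filter
        (fun m' => ∃ t, t < r ∧ wsrc a b phi seq m' = orb phi i0 t) with hPdef
      have hPne : P.Nonempty := by
        refine ⟨m0, ?_⟩
        rw [hPdef, Finset.mem_filter, Finset.mem_range]
        refine ⟨hm0, s % r, Nat.mod_lt _ hr, ?_⟩
        rw [hwm0, orb_mod hr hper]
      set l' := P.max' hPne with hl'def
      have hl'P : l' ∈ P := P.max'_mem hPne
      have hl'm : l' < m := by
        have := hl'P
        rw [hPdef, Finset.mem_filter, Finset.mem_range] at this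
        exact this.1
      obtain ⟨t0, ht0r, hwt0⟩ : ∃ t, t < r ∧ wsrc a b phi seq l' = orb phi i0 t := by
        have := hl'P
        rw [hPdef, Finset.mem_filter] at this
        exact this.2
      have hnofire : ∀ m'', l' + 1 ≤ m'' → m'' < m →
          ∀ t, wsrc a b phi seq m'' ≠ orb phi i0 t := by
        intro m'' h1 h2 t hc
        have hmem : m'' ∈ P := by
          rw [hPdef, Finset.mem_filter, Finset.mem_range]
          refine ⟨h2, t % r, Nat.mod_lt _ hr, ?_⟩
          rw [hc, orb_mod hr hper]
        have := P.le_max' m'' hmem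
        omega
      -- gain at l'
      have hgain : (seq (l'+1)) (orb phi i0 t0)
          = (seq l') (orb phi i0 t0) + (a (orb phi i0 t0)).toNat := by
        have hne : phi (wsrc a b phi seq l') ≠ wsrc a b phi seq l' := by
          rw [hwt0, ← orb_succ (phi := phi) (i0 := i0) t0]
          exact orb_ne hr hper hmin t0 1 (by omega) (by omega)
        have := run_gain (hrun l' (by omega)) hne
        rw [hwt0] at this
        exact this
      -- constancy on (l'+1, m]
      have hconst : (seq m) (orb phi i0 t0) = (seq (l'+1)) (orb phi i0 t0) := by
        apply seq_const hrun _ (by omega) (by omega)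
        intro m'' h1 h2
        constructor
        · exact hnofire m'' h1 h2 t0
        · intro hc
          have haxm : a (wsrc a b phi seq m'') ≠ ⊤ := (wsrc_spec (hrun m'' (by omega))).1
          have hphiorb : phi (orb phi i0 (t0 + r - 1)) = orb phi i0 t0 := by
            rw [← orb_succ (phi := phi) (i0 := i0) (t0 + r - 1)]
            have he : t0 + r - 1 + 1 = t0 + r := by omega
            rw [he, orb_add_r hper]
          have : wsrc a b phi seq m'' = orb phi i0 (t0 + r - 1) := by
            apply h.2.2.1.injOn haxm (orb_supp hr hper hsupp _)
            rw [hc, hphiorb]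
          exact hnofire m'' h1 h2 (t0 + r - 1) this
      -- so node t0 has ≥ NN at time m
      have hbig : NN a (orb phi i0 t0) ≤ (orb phi i0 t0 : ℕ) * (seq m) (orb phi i0 t0) := by
        rw [hconst, hgain]
        unfold NN
        calc (orb phi i0 t0 : ℕ) * (a (orb phi i0 t0)).toNat
            ≤ (orb phi i0 t0 : ℕ) * ((seq l') (orb phi i0 t0) + (a (orb phi i0 t0)).toNat) := by
              apply Nat.mul_le_mul_left
              omega
        _ = _ := rfl
      -- conservation at s' = t0 + r - 1 gives contradiction
      have hcons := cons_cycle h hrun hr hper hsupp hmin hr2 (t0 + r - 1) m (by omega)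
      have hs'1 : t0 + r - 1 + 1 = t0 + r := by omega
      rw [hs'1] at hcons
      have horb : orb phi i0 (t0 + r) = orb phi i0 t0 := orb_add_r hper t0
      rw [horb] at hcons
      rw [all_eq' (t0 + r - 1), all_eq' (t0 + r)] at hcons
      have hu0 := u0_lt hInA hr hper hsupp t0
      omega
    · rw [if_neg hx, Nat.add_zero] at hq1
      rw [hq1]
      exact ih (by omega) s

end Cycle2

section Cases

variable {a b : ℕ+ → ℕ∞} {phi : ℕ+ → ℕ+} {seq : ℕ → (ℕ+ →₀ ℕ)} {k : ℕ}

lemma orb_zero (phi : ℕ+ → ℕ+) (i0 : ℕ+) : orb phi i0 0 = i0 := rfl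

lemma orb_one (phi : ℕ+ → ℕ+) (i0 : ℕ+) : orb phi i0 1 = phi i0 := by
  unfold orb
  simp

/-- Case: non-recurrent edge. -/
lemma nonrec_bound (h : PhiEquiv a b phi)
    (hrun : ∀ l < k, OStep a b phi (seq l) (seq (l + 1))) (i : ℕ+) (hai : a i ≠ ⊤)
    (hnr : ¬ ∃ s, 0 < s ∧ (∀ m < s, a (phi^[m] i) ≠ ⊤) ∧ phi^[s] i = i) :
    NN a i * cnt (wsrc a b phi seq) i k ≤ psize (seq 0) := by
  set A : Set ℕ+ := {v | ∃ s, 0 < s ∧ (∀ m < s, a (phi^[m] i) ≠ ⊤) ∧ v = phi^[s] i} with hA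
  have hiA : i ∉ A := by
    intro hc
    obtain ⟨s, hs, hsup, heq⟩ := hc
    exact hnr ⟨s, hs, hsup, heq.symm⟩
  have hphiA : phi i ∈ A := by
    refine ⟨1, one_pos, ?_, by simp⟩
    intro m hm
    have : m = 0 := by omega
    rw [this]
    simpa using hai
  have hclosed : ∀ x, a x ≠ ⊤ → x ∈ A → phi x ∈ A := by
    intro x hax hxA
    obtain ⟨s, hs, hsup, heq⟩ := hxA
    refine ⟨s + 1, by omega, ?_, ?_⟩
    · intro m hm
      rcases Nat.lt_or_ge m s with h1 | h1
      · exact hsup m h1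
      · have : m = s := by omega
        rw [this, ← heq]
        exact hax
    · rw [Function.iterate_succ_apply', ← heq]
  have hfb := flow_bound h hrun A i hiA hphiA hclosed k (le_refl k)
  calc NN a i * cnt (wsrc a b phi seq) i k
      ≤ massOn A (seq k) + NN a i * cnt (wsrc a b phi seq) i k := by omega
  _ ≤ massOn A (seq 0) := hfb
  _ ≤ massOn Set.univ (seq 0) := massOn_mono (Set.subset_univ A) _
  _ = psize (seq 0) := massOn_univ _

/-- Case: fixed point; never fires. -/
lemma fix_no_fire (h : PhiEquiv a b phi)
    (hrun : ∀ l < k, OStep a b phi (seq l) (seq (l + 1))) (hInA : InA a (seq 0))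
    (i : ℕ+) (hai : a i ≠ ⊤) (hfix : phi i = i) :
    cnt (wsrc a b phi seq) i k = 0 := by
  by_contra hc
  have hpos : 0 < cnt (wsrc a b phi seq) i k := Nat.pos_of_ne_zero hc
  obtain ⟨l, hlk, hwl⟩ := (cnt_pos_iff _ _ _).mp hpos
  have hex : ∃ m, m < k ∧ wsrc a b phi seq m = i := ⟨l, hlk, hwl⟩
  classical
  set l0 := Nat.find hex with hl0
  obtain ⟨hl0k, hwl0⟩ := Nat.find_spec hex
  have hmin : ∀ m < l0, ¬(m < k ∧ wsrc a b phi seq m = i) := fun m hm => Nat.find_min hex hm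
  -- node i untouched before l0
  have hconst : (seq l0) i = (seq 0) i := by
    apply seq_const hrun i (Nat.zero_le _) (by omega)
    intro m h1 h2
    have hne : wsrc a b phi seq m ≠ i := by
      intro hcc
      exact hmin m h2 ⟨by omega, hcc⟩
    constructor
    · exact hne
    · intro hcc
      have haxm : a (wsrc a b phi seq m) ≠ ⊤ := (wsrc_spec (hrun m (by omega))).1
      have : wsrc a b phi seq m = i := by
        apply h.2.2.1.injOn haxm hai
        rw [hcc, hfix]
      exact hne this
  -- enabling at l0
  have hl : OStep a b phi (seq l0) (seq (l0+1)) := hrun l0 hl0k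
  have hen := (wsrc_spec hl).2.2.1
  rw [hwl0, hfix] at hen
  -- a i = b i in toNat
  have hN := Neq_toNat h hai
  rw [hfix] at hN
  have hab : (a i).toNat = (b i).toNat := Nat.eq_of_mul_eq_mul_left i.pos hN
  -- seq 0 i < aN i
  have hlt : (seq 0) i < (a i).toNat := by
    have h2 : (((seq 0) i : ℕ) : ℕ∞) < (((a i).toNat : ℕ) : ℕ∞) := by
      rw [ENat.coe_toNat hai]
      exact hInA i
    exact_mod_cast h2
  rw [hconst] at hen
  omega

/-- Pair mass invariance for 2-cycles. -/
lemma pair_inv (h : PhiEquiv a b phi)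
    (hrun : ∀ l < k, OStep a b phi (seq l) (seq (l + 1)))
    (i : ℕ+) (hper : phi (phi i) = i) (hai : a i ≠ ⊤) (haphi : a (phi i) ≠ ⊤) :
    ∀ l ≤ k, massOn {i, phi i} (seq l) = massOn {i, phi i} (seq 0) := by
  intro l
  induction l with
  | zero => intro _; rfl
  | succ m ih =>
    intro hm
    have hl : OStep a b phi (seq m) (seq (m+1)) := hrun m (by omega)
    have haxm : a (wsrc a b phi seq m) ≠ ⊤ := (wsrc_spec hl).1
    have hstep := run_massOn_step h {i, phi i} m hl
    have hiff : (wsrc a b phi seq m ∈ ({i, phi i} : Set ℕ+))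
        ↔ (phi (wsrc a b phi seq m) ∈ ({i, phi i} : Set ℕ+)) := by
      constructor
      · intro hx
        rcases hx with hx | hx
        · right
          rw [hx]
          rfl
        · left
          rw [Set.mem_singleton_iff] at hx
          rw [hx, hper]
      · intro hx
        rcases hx with hx | hx
        · right
          have : wsrc a b phi seq m = phi i := by
            apply h.2.2.1.injOn haxm haphi
            rw [hx, hper]
          rw [this]
          rfl
        · left
          rw [Set.mem_singleton_iff] at hx
          have : wsrc a b phi seq m = i := h.2.2.1.injOn haxm hai hx
          rw [this]
    by_cases hxA : wsrc a b phi seq m ∈ ({i, phi i} : Set ℕ+)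
    · rw [if_pos hxA, if_pos (hiff.mp hxA)] at hstep
      have := Nat.add_right_cancel hstep
      rw [this]
      exact ih (by omega)
    · rw [if_neg hxA, if_neg (fun hc => hxA (hiff.mpr hc))] at hstep
      rw [Nat.add_zero, Nat.add_zero] at hstep
      rw [hstep]
      exact ih (by omega)

/-- Case: 2-cycle edge. -/
lemma two_cycle_bound (h : PhiEquiv a b phi)
    (hrun : ∀ l < k, OStep a b phi (seq l) (seq (l + 1))) (hInA : InA a (seq 0))
    (i : ℕ+) (hper : phi^[2] i = i)
    (hsupp2 : ∀ s < 2, a (phi^[s] i) ≠ ⊤)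
    (hmin2 : ∀ s, 0 < s → s < 2 → phi^[s] i ≠ i) :
    cnt (wsrc a b phi seq) i k ≤ massOn {i, phi i} (seq 0) := by
  have hr2 : (2:ℕ) ≤ 2 := le_refl 2
  have hai : a i ≠ ⊤ := by simpa using hsupp2 0 (by omega)
  have haphi : a (phi i) ≠ ⊤ := by
    have := hsupp2 1 (by omega)
    simpa using this
  have hper' : phi (phi i) = i := by
    have := hper
    rw [show (2:ℕ) = 1 + 1 from rfl, Function.iterate_add_apply] at this
    simpa using this
  have hNi : 0 < NN a i := NN_pos h hai
  have hNphi : 0 < NN a (phi i) := NN_pos h haphi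
  by_cases hu : cnt (wsrc a b phi seq) (phi i) k = 0
  · -- the partner edge never fires
    have hcons := cons_cycle h hrun (by omega) hper hsupp2 hmin2 hr2 0 k (le_refl k)
    unfold QQ at hcons
    rw [orb_zero, orb_one] at hcons
    rw [hu, Nat.mul_zero] at hcons
    have hle : NN a i * cnt (wsrc a b phi seq) i k
        ≤ (phi i : ℕ) * (seq 0) (phi i) := by omega
    have h1 : cnt (wsrc a b phi seq) i k ≤ NN a i * cnt (wsrc a b phi seq) i k := by
      calc cnt (wsrc a b phi seq) i k = 1 * cnt (wsrc a b phi seq) i k := (Nat.one_mul _).symm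
      _ ≤ NN a i * cnt (wsrc a b phi seq) i k := Nat.mul_le_mul_right _ hNi
    have h2 : (phi i : ℕ) * (seq 0) (phi i) ≤ massOn {i, phi i} (seq 0) :=
      single_le_massOn (by right; rfl)
    omega
  · -- partner fires at some l; use crossing + enabling
    obtain ⟨l, hlk, hwl⟩ := (cnt_pos_iff _ _ _).mp (Nat.pos_of_ne_zero hu)
    have hl : OStep a b phi (seq l) (seq (l+1)) := hrun l hlk
    have hen := (wsrc_spec hl).2.2.1
    rw [hwl, hper'] at hen
    -- NN a (phi i) = i * bN i
    have hN := Neq_toNat h haphi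
    rw [hper'] at hN
    -- crossing at s = 0
    have hcross := crossing h hrun hInA hper hsupp2 hmin2 hr2 k (le_refl k) 0
    unfold QQ KK at hcross
    rw [orb_zero] at hcross
    have hprod : ∏ s ∈ Finset.range 2, NN a (orb phi i s) = NN a i * NN a (phi i) := by
      rw [Finset.prod_range_succ, Finset.prod_range_succ, Finset.prod_range_zero,
        one_mul, orb_zero, orb_one]
    rw [hprod] at hcross
    have h1 : cnt (wsrc a b phi seq) i k ≤ NN a (phi i) :=
      Nat.le_of_mul_le_mul_left hcross hNi
    have h2 : (i : ℕ) * (b i).toNat ≤ (i : ℕ) * (seq l) i :=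
      Nat.mul_le_mul_left _ hen
    have h3 : (i : ℕ) * (seq l) i ≤ massOn {i, phi i} (seq l) :=
      single_le_massOn (by left; rfl)
    have h4 := pair_inv h hrun i hper' hai haphi l (by omega)
    rw [hN] at h1
    omega

end Cases

section Helpers

variable {a b : ℕ+ → ℕ∞} {phi : ℕ+ → ℕ+} {seq : ℕ → (ℕ+ →₀ ℕ)} {k : ℕ}

lemma rec_phiPeriodic (i : ℕ+) (hai : a i ≠ ⊤)
    (hrec : ∃ s, 0 < s ∧ (∀ m < s, a (phi^[m] i) ≠ ⊤) ∧ phi^[s] i = i)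
    (h1 : phi i ≠ i) (h2 : phi (phi i) ≠ i) :
    ∃ r : ℕ, 2 < r ∧ PhiPeriodic a phi i r := by
  classical
  set r := Nat.find hrec with hrdef
  obtain ⟨hr0, hchain, heq⟩ := Nat.find_spec hrec
  have hne1 : r ≠ 1 := by
    intro hc
    rw [← hrdef, hc] at heq
    simp only [Function.iterate_one] at heq
    exact h1 heq
  have hne2 : r ≠ 2 := by
    intro hc
    rw [← hrdef, hc] at heq
    rw [show (2:ℕ) = 1 + 1 from rfl, Function.iterate_add_apply] at heq
    simp only [Function.iterate_one] at heq
    exact h2 heq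
  refine ⟨r, by omega, hr0, hai, fun s hs hsr => hchain s hsr, heq, ?_⟩
  intro s hs hsr hc
  exact (Nat.find_min hrec (by rw [← hrdef]; exact hsr)) ⟨hs, fun m hm => hchain m (by omega), hc⟩

lemma phiPeriodic_unique {i : ℕ+} {r r' : ℕ} (hp : PhiPeriodic a phi i r)
    (hp' : PhiPeriodic a phi i r') : r = r' := by
  by_contra hne
  rcases Nat.lt_or_ge r r' with hlt | hge
  · exact hp'.2.2.2.2 r hp.1 hlt hp.2.2.2.1
  · exact hp.2.2.2.2 r' hp'.1 (by omega) hp'.2.2.2.1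

noncomputable def BB (a : ℕ+ → ℕ∞) (phi : ℕ+ → ℕ+) (i : ℕ+) : ℕ :=
  if h : ∃ r : ℕ, 2 < r ∧ PhiPeriodic a phi i r then KK a phi i h.choose else 0

lemma big_cycle_bound (h : PhiEquiv a b phi)
    (hrun : ∀ l < k, OStep a b phi (seq l) (seq (l + 1))) (hInA : InA a (seq 0))
    (i : ℕ+) (hex : ∃ r : ℕ, 2 < r ∧ PhiPeriodic a phi i r) :
    cnt (wsrc a b phi seq) i k ≤ BB a phi i := by
  obtain ⟨hr3, hp⟩ := hex.choose_spec
  have hsupp : ∀ s < hex.choose, a (phi^[s] i) ≠ ⊤ := by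
    intro s hs
    rcases Nat.eq_zero_or_pos s with h0 | hpos
    · rw [h0]
      simpa using hp.2.1
    · exact hp.2.2.1 s hpos hs
  have hcross := crossing h hrun hInA hp.2.2.2.1 hsupp hp.2.2.2.2 (by omega) k (le_refl k) 0
  unfold QQ at hcross
  rw [orb_zero] at hcross
  have hB : BB a phi i = KK a phi i hex.choose := by
    unfold BB
    rw [dif_pos hex]
  rw [hB]
  have hNi : 0 < NN a i := NN_pos h (by simpa using hsupp 0 (by omega))
  calc cnt (wsrc a b phi seq) i k
      = 1 * cnt (wsrc a b phi seq) i k := (Nat.one_mul _).symm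
  _ ≤ NN a i * cnt (wsrc a b phi seq) i k := Nat.mul_le_mul_right _ hNi
  _ ≤ KK a phi i hex.choose := hcross

lemma used_NN_le (h : PhiEquiv a b phi)
    (hrun : ∀ l < k, OStep a b phi (seq l) (seq (l + 1)))
    {i : ℕ+} {l : ℕ} (hlk : l < k) (hwl : wsrc a b phi seq l = i) :
    NN a i ≤ psize (seq 0) := by
  have hl : OStep a b phi (seq l) (seq (l+1)) := hrun l hlk
  have hax : a (wsrc a b phi seq l) ≠ ⊤ := (wsrc_spec hl).1
  have hen := (wsrc_spec hl).2.2.1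
  have hN := Neq_toNat h hax
  have h1 : ((phi (wsrc a b phi seq l) : ℕ+) : ℕ) * (b (phi (wsrc a b phi seq l))).toNat
      ≤ ((phi (wsrc a b phi seq l) : ℕ+) : ℕ) * (seq l) (phi (wsrc a b phi seq l)) :=
    Nat.mul_le_mul_left _ hen
  have h2 : ((phi (wsrc a b phi seq l) : ℕ+) : ℕ) * (seq l) (phi (wsrc a b phi seq l))
      ≤ psize (seq l) := by
    rw [← massOn_univ]
    exact single_le_massOn (Set.mem_univ _)
  have h3 := psize_inv h hrun l (by omega)
  rw [← hwl, hN]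
  omega

lemma harmonic_le (n : ℕ) : (∑ v ∈ Finset.Icc 1 n, (1:ℝ)/v) ≤ 1 + Real.log n := by
  induction n with
  | zero => simp
  | succ m ih =>
    rw [Finset.sum_Icc_succ_top (by omega : 1 ≤ m + 1)]
    rcases Nat.eq_zero_or_pos m with h0 | hpos
    · subst h0
      norm_num
    · have hm0 : (0:ℝ) < m := by exact_mod_cast hpos
      have key : (1:ℝ)/((m:ℝ)+1) ≤ Real.log ((m:ℝ)+1) - Real.log m := by
        have hx : Real.log ((m:ℝ)/((m:ℝ)+1)) ≤ (m:ℝ)/((m:ℝ)+1) - 1 :=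
          Real.log_le_sub_one_of_pos (by positivity)
        rw [Real.log_div (ne_of_gt hm0) (by positivity)] at hx
        have he : (m:ℝ)/((m:ℝ)+1) - 1 = -(1/((m:ℝ)+1)) := by
          field_simp
          ring
        rw [he] at hx
        linarith
      have hlast : ((m+1 : ℕ) : ℝ) = (m:ℝ) + 1 := by push_cast; ring
      rw [hlast]
      linarith

end Helpers


/-- if `G_φ` has only finitely many cycles of length `> 2`
(i.e. only finitely many `i ∈ supp(a)` are `φ`-periodic with minimal period
`> 2`), then there is `C > 0` such that for every `n ≥ 2` and every
`λ ∈ 𝒜_n`, every rewrite sequence from `λ` has length at most `C·n·log n`. -/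
theorem ohara_nlogn_bound (a b : ℕ+ → ℕ∞) (phi : ℕ+ → ℕ+)
    (h : PhiEquiv a b phi)
    (hfin : {i : ℕ+ | ∃ r : ℕ, 2 < r ∧ PhiPeriodic a phi i r}.Finite) :
    ∃ C : ℝ, 0 < C ∧ ∀ n : ℕ, 2 ≤ n → ∀ lam : ℕ+ →₀ ℕ,
      InA a lam → psize lam = n →
      ∀ (seq : ℕ → (ℕ+ →₀ ℕ)) (k : ℕ), seq 0 = lam →
        (∀ l < k, OStep a b phi (seq l) (seq (l + 1))) →
        (k : ℝ) ≤ C * n * Real.log n := by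
  classical
  set D : ℕ := ∑ i ∈ hfin.toFinset, BB a phi i with hD
  have hlog2 : 0 < Real.log 2 := Real.log_pos (by norm_num)
  refine ⟨1 + ((D:ℝ) + 3) / Real.log 2, by positivity, ?_⟩
  intro n hn lam hlam hsize seq k hseq0 hsteps
  have hInA0 : InA a (seq 0) := by rw [hseq0]; exact hlam
  have hps0 : psize (seq 0) = n := by rw [hseq0]; exact hsize
  set I : Finset ℕ+ := (Finset.range k).image (wsrc a b phi seq) with hI
  have hksum : k = ∑ i ∈ I, cnt (wsrc a b phi seq) i k := by
    have hcard := Finset.card_eq_sum_card_fiberwise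
      (f := wsrc a b phi seq) (s := Finset.range k) (t := I)
      (fun x hx => Finset.mem_image_of_mem _ hx)
    rw [Finset.card_range] at hcard
    exact hcard
  -- usedness facts
  have hused : ∀ i ∈ I, ∃ l, l < k ∧ wsrc a b phi seq l = i := by
    intro i hi
    rw [hI, Finset.mem_image] at hi
    obtain ⟨l, hl, hwl⟩ := hi
    exact ⟨l, Finset.mem_range.mp hl, hwl⟩
  have hai : ∀ i ∈ I, a i ≠ ⊤ := by
    intro i hi
    obtain ⟨l, hlk, hwl⟩ := hused i hi
    have := (wsrc_spec (hsteps l hlk)).1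
    rwa [hwl] at this
  have haN : ∀ i ∈ I, 0 < (a i).toNat := by
    intro i hi
    have h0 : a i ≠ 0 := h.1 i
    have h1 : (a i).toNat ≠ 0 := by
      intro hc
      rcases ENat.toNat_eq_zero.mp hc with h' | h'
      · exact h0 h'
      · exact hai i hi h'
    omega
  have hiNN : ∀ i ∈ I, (i:ℕ) ≤ NN a i := by
    intro i hi
    have := haN i hi
    unfold NN
    calc (i:ℕ) = (i:ℕ) * 1 := (Nat.mul_one _).symm
    _ ≤ (i:ℕ) * (a i).toNat := Nat.mul_le_mul_left _ (by omega)
  have hNNn : ∀ i ∈ I, NN a i ≤ n := by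
    intro i hi
    obtain ⟨l, hlk, hwl⟩ := hused i hi
    have := used_NN_le h hsteps hlk hwl
    omega
  have hin : ∀ i ∈ I, (i:ℕ) ≤ n := fun i hi => le_trans (hiNN i hi) (hNNn i hi)
  -- classification
  set REC : ℕ+ → Prop := fun i => ∃ s, 0 < s ∧ (∀ m < s, a (phi^[m] i) ≠ ⊤) ∧ phi^[s] i = i
    with hREC
  set S1 := I.filter (fun i => ¬ REC i) with hS1
  set SR := I.filter REC with hSR
  set S2a := SR.filter (fun i => phi i = i) with hS2a
  set SRb := SR.filter (fun i => phi i ≠ i) with hSRb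
  set S2b := SRb.filter (fun i => phi (phi i) = i) with hS2b
  set S2c := SRb.filter (fun i => phi (phi i) ≠ i) with hS2c
  have hsplit1 : ∑ i ∈ I, cnt (wsrc a b phi seq) i k
      = ∑ i ∈ SR, cnt (wsrc a b phi seq) i k + ∑ i ∈ S1, cnt (wsrc a b phi seq) i k := by
    rw [hSR, hS1]
    exact (Finset.sum_filter_add_sum_filter_not I REC _).symm
  have hsplit2 : ∑ i ∈ SR, cnt (wsrc a b phi seq) i k
      = ∑ i ∈ S2a, cnt (wsrc a b phi seq) i k + ∑ i ∈ SRb, cnt (wsrc a b phi seq) i k := by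
    rw [hS2a, hSRb]
    exact (Finset.sum_filter_add_sum_filter_not SR _ _).symm
  have hsplit3 : ∑ i ∈ SRb, cnt (wsrc a b phi seq) i k
      = ∑ i ∈ S2b, cnt (wsrc a b phi seq) i k + ∑ i ∈ S2c, cnt (wsrc a b phi seq) i k := by
    rw [hS2b, hS2c]
    exact (Finset.sum_filter_add_sum_filter_not SRb _ _).symm
  -- (1) fixed points never fire
  have hb2a : ∑ i ∈ S2a, cnt (wsrc a b phi seq) i k = 0 := by
    apply Finset.sum_eq_zero
    intro i hi
    rw [hS2a, Finset.mem_filter] at hi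
    obtain ⟨hiSR, hfix⟩ := hi
    rw [hSR, Finset.mem_filter] at hiSR
    exact fix_no_fire h hsteps hInA0 i (hai i hiSR.1) hfix
  -- (2) 2-cycles
  have hb2b : ∑ i ∈ S2b, cnt (wsrc a b phi seq) i k ≤ 2 * n := by
    have hstep1 : ∀ i ∈ S2b, cnt (wsrc a b phi seq) i k
        ≤ (i:ℕ) * (seq 0) i + ((phi i : ℕ+):ℕ) * (seq 0) (phi i) := by
      intro i hi
      rw [hS2b, Finset.mem_filter] at hi
      obtain ⟨hiSRb, hper'⟩ := hi
      rw [hSRb, Finset.mem_filter] at hiSRb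
      obtain ⟨hiSR, hne1⟩ := hiSRb
      rw [hSR, Finset.mem_filter] at hiSR
      obtain ⟨hiI, hrec⟩ := hiSR
      have hai' := hai i hiI
      have haphi : a (phi i) ≠ ⊤ := by
        obtain ⟨s, hs0, hchain, hseqq⟩ := hrec
        have hs2 : 2 ≤ s := by
          by_contra hc
          have : s = 1 := by omega
          rw [this] at hseqq
          simp only [Function.iterate_one] at hseqq
          exact hne1 hseqq
        have := hchain 1 (by omega)
        simpa using this
      have hper2 : phi^[2] i = i := by
        rw [show (2:ℕ) = 1 + 1 from rfl, Function.iterate_add_apply]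
        simpa using hper'
      have hsupp2 : ∀ s < 2, a (phi^[s] i) ≠ ⊤ := by
        intro s hs
        interval_cases s
        · simpa using hai'
        · simpa using haphi
      have hmin2 : ∀ s, 0 < s → s < 2 → phi^[s] i ≠ i := by
        intro s h1 h2
        have : s = 1 := by omega
        rw [this]
        simpa using hne1
      have := two_cycle_bound h hsteps hInA0 i hper2 hsupp2 hmin2
      calc cnt (wsrc a b phi seq) i k ≤ massOn {i, phi i} (seq 0) := this
      _ ≤ (i:ℕ) * (seq 0) i + ((phi i : ℕ+):ℕ) * (seq 0) (phi i) := massOn_pair_le _ _ _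
    calc ∑ i ∈ S2b, cnt (wsrc a b phi seq) i k
        ≤ ∑ i ∈ S2b, ((i:ℕ) * (seq 0) i + ((phi i : ℕ+):ℕ) * (seq 0) (phi i)) :=
          Finset.sum_le_sum hstep1
    _ = ∑ i ∈ S2b, (i:ℕ) * (seq 0) i + ∑ i ∈ S2b, ((phi i : ℕ+):ℕ) * (seq 0) (phi i) :=
          Finset.sum_add_distrib
    _ ≤ n + n := by
        have hA : ∑ i ∈ S2b, (i:ℕ) * (seq 0) i ≤ n := by
          have := sum_single_le_psize S2b (seq 0)
          omega
        have hB : ∑ i ∈ S2b, ((phi i : ℕ+):ℕ) * (seq 0) (phi i) ≤ n := by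
          have hinj : ∀ x ∈ S2b, ∀ y ∈ S2b, phi x = phi y → x = y := by
            intro x hx y hy hxy
            have hxI : x ∈ I := by
              rw [hS2b, Finset.mem_filter] at hx
              have := hx.1
              rw [hSRb, Finset.mem_filter] at this
              have := this.1
              rw [hSR, Finset.mem_filter] at this
              exact this.1
            have hyI : y ∈ I := by
              rw [hS2b, Finset.mem_filter] at hy
              have := hy.1
              rw [hSRb, Finset.mem_filter] at this
              have := this.1
              rw [hSR, Finset.mem_filter] at this
              exact this.1
            exact h.2.2.1.injOn (hai x hxI) (hai y hyI) hxy
          have himg : ∑ i ∈ S2b.image phi, (i:ℕ) * (seq 0) i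
              = ∑ i ∈ S2b, ((phi i : ℕ+):ℕ) * (seq 0) (phi i) :=
            Finset.sum_image hinj
          rw [← himg]
          have := sum_single_le_psize (S2b.image phi) (seq 0)
          omega
        omega
    _ = 2 * n := by ring
  -- (3) big cycles
  have hb2c : ∑ i ∈ S2c, cnt (wsrc a b phi seq) i k ≤ D := by
    have hsub : S2c ⊆ hfin.toFinset := by
      intro i hi
      rw [hS2c, Finset.mem_filter] at hi
      obtain ⟨hiSRb, hne2⟩ := hi
      rw [hSRb, Finset.mem_filter] at hiSRb
      obtain ⟨hiSR, hne1⟩ := hiSRb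
      rw [hSR, Finset.mem_filter] at hiSR
      obtain ⟨hiI, hrec⟩ := hiSR
      rw [Set.Finite.mem_toFinset]
      exact rec_phiPeriodic i (hai i hiI) hrec hne1 hne2
    calc ∑ i ∈ S2c, cnt (wsrc a b phi seq) i k ≤ ∑ i ∈ S2c, BB a phi i := by
          apply Finset.sum_le_sum
          intro i hi
          have hi' := hsub hi
          rw [Set.Finite.mem_toFinset] at hi'
          exact big_cycle_bound h hsteps hInA0 i hi'
    _ ≤ D := by
          rw [hD]
          exact Finset.sum_le_sum_of_subset hsub
  -- (4) non-recurrent, harmonic bound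
  have hb1 : (∑ i ∈ S1, (cnt (wsrc a b phi seq) i k : ℝ)) ≤ n * (1 + Real.log n) := by
    have hterm : ∀ i ∈ S1, (cnt (wsrc a b phi seq) i k : ℝ) ≤ (n:ℝ) * (1 / (i:ℕ)) := by
      intro i hi
      rw [hS1, Finset.mem_filter] at hi
      obtain ⟨hiI, hnr⟩ := hi
      have hnb := nonrec_bound h hsteps i (hai i hiI) hnr
      rw [hps0] at hnb
      have h1 : (i:ℕ) * cnt (wsrc a b phi seq) i k ≤ n := by
        calc (i:ℕ) * cnt (wsrc a b phi seq) i k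
            ≤ NN a i * cnt (wsrc a b phi seq) i k :=
              Nat.mul_le_mul_right _ (hiNN i hiI)
        _ ≤ n := hnb
      have hipos : (0:ℝ) < ((i:ℕ):ℝ) := by exact_mod_cast i.pos
      rw [mul_one_div, le_div_iff₀ hipos]
      have : ((i:ℕ) * cnt (wsrc a b phi seq) i k : ℕ) ≤ (n:ℕ) := h1
      calc (cnt (wsrc a b phi seq) i k : ℝ) * ((i:ℕ):ℝ)
          = (((i:ℕ) * cnt (wsrc a b phi seq) i k : ℕ) : ℝ) := by push_cast; ring
      _ ≤ (n:ℝ) := by exact_mod_cast this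
    calc (∑ i ∈ S1, (cnt (wsrc a b phi seq) i k : ℝ))
        ≤ ∑ i ∈ S1, (n:ℝ) * (1 / (i:ℕ)) := Finset.sum_le_sum hterm
    _ = (n:ℝ) * ∑ i ∈ S1, (1 / ((i:ℕ):ℝ)) := by rw [Finset.mul_sum]
    _ ≤ (n:ℝ) * (1 + Real.log n) := by
        apply mul_le_mul_of_nonneg_left _ (by positivity)
        have himg : ∑ i ∈ S1, (1 / ((i:ℕ):ℝ))
            = ∑ v ∈ S1.image (fun i : ℕ+ => (i:ℕ)), (1 / (v:ℝ)) := by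
          rw [Finset.sum_image]
          intro x _ y _ hxy
          exact PNat.coe_injective hxy
        rw [himg]
        have hsub : S1.image (fun i : ℕ+ => (i:ℕ)) ⊆ Finset.Icc 1 n := by
          intro v hv
          rw [Finset.mem_image] at hv
          obtain ⟨i, hi, hiv⟩ := hv
          rw [hS1, Finset.mem_filter] at hi
          rw [Finset.mem_Icc, ← hiv]
          exact ⟨i.one_le, hin i hi.1⟩
        calc ∑ v ∈ S1.image (fun i : ℕ+ => (i:ℕ)), (1 / (v:ℝ))
            ≤ ∑ v ∈ Finset.Icc 1 n, (1 / (v:ℝ)) := by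
              apply Finset.sum_le_sum_of_subset_of_nonneg hsub
              intro v _ _
              positivity
        _ ≤ 1 + Real.log n := harmonic_le n
  -- assemble
  set A1 := ∑ i ∈ S1, cnt (wsrc a b phi seq) i k with hA1
  set A2 := ∑ i ∈ S2a, cnt (wsrc a b phi seq) i k with hA2
  set A3 := ∑ i ∈ S2b, cnt (wsrc a b phi seq) i k with hA3
  set A4 := ∑ i ∈ S2c, cnt (wsrc a b phi seq) i k with hA4
  have hknat : k = A1 + A2 + A3 + A4 := by
    rw [hksum, hsplit1, hsplit2, hsplit3]
    ring
  have hkreal : (k:ℝ) = ((A1:ℕ):ℝ) + ((A2:ℕ):ℝ) + ((A3:ℕ):ℝ) + ((A4:ℕ):ℝ) := by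
    exact_mod_cast hknat
  have hcast1 : ((A1:ℕ):ℝ) = ∑ i ∈ S1, (cnt (wsrc a b phi seq) i k : ℝ) := by
    rw [hA1]
    push_cast
    rfl
  have hlogn : Real.log 2 ≤ Real.log n := by
    apply Real.log_le_log (by norm_num)
    exact_mod_cast hn
  have hnR : (2:ℝ) ≤ (n:ℝ) := by exact_mod_cast hn
  have hDn : ((D:ℝ)) ≤ (D:ℝ) * n := by nlinarith [Nat.cast_nonneg (α := ℝ) D]
  have hkey : (n:ℝ) ≤ (n:ℝ) * Real.log n / Real.log 2 := by
    rw [le_div_iff₀ hlog2]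
    nlinarith [hlogn, hnR]
  have hfinal : (k:ℝ) ≤ (n:ℝ) * (1 + Real.log n) + 2 * n + D := by
    rw [hkreal]
    have c2a : ((A2:ℕ):ℝ) = 0 := by rw [hb2a]; norm_num
    have c2b : ((A3:ℕ):ℝ) ≤ 2 * (n:ℝ) := by
      have : ((A3:ℕ):ℝ) ≤ ((2 * n : ℕ):ℝ) := by exact_mod_cast hb2b
      push_cast at this
      linarith
    have c2c : ((A4:ℕ):ℝ) ≤ (D:ℝ) := by exact_mod_cast hb2c
    rw [hcast1]
    linarith [hb1]
  calc (k:ℝ) ≤ (n:ℝ) * (1 + Real.log n) + 2 * n + D := hfinal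
  _ ≤ (1 + ((D:ℝ) + 3) / Real.log 2) * n * Real.log n := by
      have hexp : (1 + ((D:ℝ) + 3) / Real.log 2) * n * Real.log n
          = (n:ℝ) * Real.log n + ((D:ℝ) + 3) * ((n:ℝ) * Real.log n / Real.log 2) := by
        field_simp
      rw [hexp]
      have h5 : ((D:ℝ) + 3) * (n:ℝ) ≤ ((D:ℝ) + 3) * ((n:ℝ) * Real.log n / Real.log 2) := by
        apply mul_le_mul_of_nonneg_left hkey
        positivity
      nlinarith [h5, hDn, hnR]
end

section
/- There exist sequences a, b and a bijection φ with a ∼_φ b such that the graph G_φ is a path, and a constant c > 0, such that for infinitely many n there exist a partition λ ∈ 𝒜_n and a rewrite sequence from λ of length at least c·n·log(log n). -/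
open scoped BigOperators

namespace OharaPf

/-- the `a`-sequence, on underlying naturals. -/
def A : ℕ → ℕ∞ := fun m =>
  if m % 2 = 1 ∧ 5 ≤ m then ((2*m - 4 : ℕ) : ℕ∞)
  else if m % 4 = 2 ∧ 6 ≤ m then ((1 : ℕ) : ℕ∞) else ⊤

/-- the `b`-sequence, on underlying naturals. -/
def B : ℕ → ℕ∞ := fun m =>
  if m % 2 = 1 ∧ 3 ≤ m then ((2 : ℕ) : ℕ∞)
  else if m % 4 = 2 ∧ 6 ≤ m then ((m/2 + 2 : ℕ) : ℕ∞) else ⊤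

/-- the bijection `φ`, on underlying naturals. -/
def Phi : ℕ → ℕ := fun m =>
  if m % 2 = 1 ∧ 5 ≤ m then 2*m - 4
  else if m % 4 = 2 ∧ 6 ≤ m then m/2 else 1

lemma Phi_pos (m : ℕ) : 0 < Phi m := by
  unfold Phi; split_ifs <;> omega

def aa : ℕ+ → ℕ∞ := fun i => A (i : ℕ)
def bb : ℕ+ → ℕ∞ := fun i => B (i : ℕ)
def pp : ℕ+ → ℕ+ := fun i => ⟨Phi (i : ℕ), Phi_pos _⟩

/-- odd vertices -/
def u (t : ℕ) : ℕ+ := ⟨2*t+3, by omega⟩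
/-- even vertices -/
def w (t : ℕ) : ℕ+ := ⟨4*t+6, by omega⟩

lemma u_coe (t : ℕ) : ((u t : ℕ+) : ℕ) = 2*t+3 := rfl
lemma w_coe (t : ℕ) : ((w t : ℕ+) : ℕ) = 4*t+6 := rfl

lemma u_ne_w (t s : ℕ) : u t ≠ w s := by
  intro h
  have := congrArg (fun x : ℕ+ => (x : ℕ)) h
  simp [u_coe, w_coe] at this
  omega

lemma aa_w (t : ℕ) : aa (w t) = ((1 : ℕ) : ℕ∞) := by
  show A (4*t+6) = _
  unfold A
  rw [if_neg (by omega), if_pos (by omega)]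

lemma aa_u_succ (t : ℕ) : aa (u (t+1)) = ((4*t+6 : ℕ) : ℕ∞) := by
  show A (2*(t+1)+3) = _
  unfold A
  rw [if_pos (by omega)]
  congr 1
  omega

lemma bb_u (t : ℕ) : bb (u t) = ((2 : ℕ) : ℕ∞) := by
  show B (2*t+3) = _
  unfold B
  rw [if_pos (by omega)]

lemma bb_w (t : ℕ) : bb (w t) = ((2*t+5 : ℕ) : ℕ∞) := by
  show B (4*t+6) = _
  unfold B
  rw [if_neg (by omega), if_pos (by omega)]
  congr 1
  omega

lemma pp_w (t : ℕ) : pp (w t) = u t := by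
  apply Subtype.ext
  show Phi (4*t+6) = 2*t+3
  unfold Phi
  rw [if_neg (by omega), if_pos (by omega)]
  omega

lemma pp_u_succ (t : ℕ) : pp (u (t+1)) = w t := by
  apply Subtype.ext
  show Phi (2*(t+1)+3) = 4*t+6
  unfold Phi
  rw [if_pos (by omega)]
  omega

/-! ### Reachability -/

def Reach (k : ℕ) (x y : ℕ+ →₀ ℕ) : Prop :=
  ∃ seq : ℕ → (ℕ+ →₀ ℕ), seq 0 = x ∧ seq k = y ∧
    ∀ l < k, OStep aa bb pp (seq l) (seq (l+1))

lemma reach_refl (x : ℕ+ →₀ ℕ) : Reach 0 x x :=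
  ⟨fun _ => x, rfl, rfl, by omega⟩

lemma reach_trans {k1 k2 : ℕ} {x y z : ℕ+ →₀ ℕ}
    (h1 : Reach k1 x y) (h2 : Reach k2 y z) : Reach (k1 + k2) x z := by
  obtain ⟨s1, h10, h1k, h1s⟩ := h1
  obtain ⟨s2, h20, h2k, h2s⟩ := h2
  refine ⟨fun l => if l < k1 then s1 l else s2 (l - k1), ?_, ?_, ?_⟩
  · by_cases h : 0 < k1
    · simp [h, h10]
    · have hk1 : k1 = 0 := by omega
      simp [hk1, h20, ← h10, hk1 ▸ h1k]
  · have : ¬ (k1 + k2 < k1) := by omega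
    simp only [this, if_false]
    simpa using h2k
  · intro l hl
    by_cases ha : l + 1 < k1
    · have hb : l < k1 := by omega
      simp only [ha, hb, if_true]
      exact h1s l hb
    · by_cases hb : l < k1
      · have hl1 : l + 1 = k1 := by omega
        simp only [ha, hb, if_true, if_false]
        have : s2 (l + 1 - k1) = s1 (l+1) := by
          rw [hl1]; simp [h20, ← h1k, hl1]
        rw [this]
        exact h1s l hb
      · simp only [ha, hb, if_false]
        have h1 : l + 1 - k1 = (l - k1) + 1 := by omega
        rw [h1]
        exact h2s (l - k1) (by omega)

lemma reach_single {x y : ℕ+ →₀ ℕ} (h : OStep aa bb pp x y) : Reach 1 x y := by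
  refine ⟨fun l => if l = 0 then x else y, by simp, by simp, ?_⟩
  intro l hl
  have : l = 0 := by omega
  subst this
  simpa using h

end OharaPf
namespace OharaPf

lemma step_cheap (t p s : ℕ) (hp : 2 ≤ p) :
    OStep aa bb pp (Finsupp.single (u t) p + Finsupp.single (w t) s)
      (Finsupp.single (u t) (p-2) + Finsupp.single (w t) (s+1)) := by
  have hne : u t ≠ w t := u_ne_w t t
  refine ⟨w t, u t, pp_w t, ?_, ?_, ?_, ?_⟩
  · rw [aa_w]; simp
  · rw [bb_u]; simp
  · rw [bb_u]
    have : (Finsupp.single (u t) p + Finsupp.single (w t) s) (u t) = p := by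
      simp [Finsupp.single_apply, hne, Ne.symm hne]
    rw [this]
    exact_mod_cast hp
  · rw [aa_w, bb_u]
    intro l
    simp only [ENat.toNat_coe]
    by_cases h1 : l = u t
    · subst h1
      rw [if_neg hne, if_pos rfl]
      simp [Finsupp.single_apply, hne, Ne.symm hne]
    · by_cases h2 : l = w t
      · subst h2
        rw [if_pos rfl, if_neg (fun h => hne h.symm)]
        simp [Finsupp.single_apply, hne, Ne.symm hne]
      · rw [if_neg h2, if_neg h1]
        simp [Finsupp.single_apply, Ne.symm h1, Ne.symm h2]

lemma step_exp (t q r : ℕ) (hq : 2*t+5 ≤ q) :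
    OStep aa bb pp (Finsupp.single (w t) q + Finsupp.single (u (t+1)) r)
      (Finsupp.single (w t) (q - (2*t+5)) + Finsupp.single (u (t+1)) (r + (4*t+6))) := by
  have hne : u (t+1) ≠ w t := u_ne_w (t+1) t
  refine ⟨u (t+1), w t, pp_u_succ t, ?_, ?_, ?_, ?_⟩
  · rw [aa_u_succ]; exact ENat.coe_ne_top _
  · rw [bb_w]; exact ENat.coe_ne_top _
  · rw [bb_w]
    have : (Finsupp.single (w t) q + Finsupp.single (u (t+1)) r) (w t) = q := by
      simp [Finsupp.single_apply, hne, Ne.symm hne]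
    rw [this]
    exact_mod_cast hq
  · rw [aa_u_succ, bb_w]
    intro l
    simp only [ENat.toNat_coe]
    by_cases h1 : l = w t
    · subst h1
      rw [if_neg (fun h => hne h.symm), if_pos rfl]
      simp [Finsupp.single_apply, hne, Ne.symm hne]
    · by_cases h2 : l = u (t+1)
      · subst h2
        rw [if_pos rfl, if_neg hne]
        simp [Finsupp.single_apply, hne, Ne.symm hne]
      · rw [if_neg h2, if_neg h1]
        simp [Finsupp.single_apply, Ne.symm h1, Ne.symm h2]

lemma reach_cheap (t : ℕ) : ∀ (m p s : ℕ),
    Reach m (Finsupp.single (u t) (p + 2*m) + Finsupp.single (w t) s)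
      (Finsupp.single (u t) p + Finsupp.single (w t) (s + m)) := by
  intro m
  induction m with
  | zero => intro p s; simpa using reach_refl _
  | succ m ih =>
    intro p s
    have h1 := step_cheap t (p + 2*(m+1)) s (by omega)
    have e1 : p + 2*(m+1) - 2 = p + 2*m := by omega
    rw [e1] at h1
    have h2 := ih p (s+1)
    have e2 : s + 1 + m = s + (m+1) := by omega
    rw [e2] at h2
    have h3 := reach_trans (reach_single h1) h2
    rwa [Nat.add_comm 1 m] at h3

lemma reach_exp (t : ℕ) : ∀ (m q r : ℕ),
    Reach m (Finsupp.single (w t) (q + (2*t+5)*m) + Finsupp.single (u (t+1)) r)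
      (Finsupp.single (w t) q + Finsupp.single (u (t+1)) (r + (4*t+6)*m)) := by
  intro m
  induction m with
  | zero => intro q r; simpa using reach_refl _
  | succ m ih =>
    intro q r
    have h1 := step_exp t (q + (2*t+5)*(m+1)) r (by rw [Nat.mul_succ]; omega)
    have e1 : q + (2*t+5)*(m+1) - (2*t+5) = q + (2*t+5)*m := by rw [Nat.mul_succ]; omega
    rw [e1] at h1
    have h2 := ih q (r + (4*t+6))
    have e2 : r + (4*t+6) + (4*t+6)*m = r + (4*t+6)*(m+1) := by rw [Nat.mul_succ]; omega
    rw [e2] at h2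
    have h3 := reach_trans (reach_single h1) h2
    rwa [Nat.add_comm 1 m] at h3

lemma reach_block (t S E : ℕ) (hSE : S = (2*t+5) * E) :
    Reach (S + E) (Finsupp.single (u t) (2*S))
      (Finsupp.single (u (t+1)) ((4*t+6) * E)) := by
  have h1 := reach_cheap t S 0 0
  simp only [Nat.zero_add, Nat.add_zero, Finsupp.single_zero, zero_add, add_zero] at h1
  have h2 := reach_exp t E 0 0
  simp only [Nat.zero_add, Nat.add_zero, Finsupp.single_zero, zero_add, add_zero] at h2
  rw [← hSE] at h2
  exact reach_trans h1 h2

end OharaPf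
namespace OharaPf

def sP (T t : ℕ) : ℕ := ∏ j ∈ (Finset.range (T+2)).erase t, (2*j+3)
def eP (T t : ℕ) : ℕ := ∏ j ∈ ((Finset.range (T+2)).erase t).erase (t+1), (2*j+3)
def PP (T : ℕ) : ℕ := ∏ j ∈ Finset.range (T+2), (2*j+3)

lemma sP_mul (T t : ℕ) (ht : t ≤ T+1) : (2*t+3) * sP T t = PP T := by
  have h : t ∈ Finset.range (T+2) := by simp; omega
  exact Finset.mul_prod_erase _ (fun j => 2*j+3) h

lemma sP_eq (T t : ℕ) (ht : t ≤ T) : sP T t = (2*t+5) * eP T t := by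
  have h : t+1 ∈ (Finset.range (T+2)).erase t := by
    simp [Finset.mem_erase]; omega
  have := Finset.mul_prod_erase _ (fun j => 2*j+3) h
  rw [sP, ← this, eP]
  show (2*(t+1)+3) * _ = _
  have h2 : 2 * (t+1) + 3 = 2*t+5 := by omega
  rw [h2]

lemma sP_succ (T t : ℕ) (ht : t ≤ T) : sP T (t+1) = (2*t+3) * eP T t := by
  have h : t ∈ (Finset.range (T+2)).erase (t+1) := by
    simp [Finset.mem_erase]; omega
  have := Finset.mul_prod_erase _ (fun j => 2*j+3) h
  rw [sP, ← this, eP, Finset.erase_right_comm]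

lemma reach_main (T : ℕ) : ∀ m, m ≤ T+1 →
    Reach (∑ t ∈ Finset.range m, (sP T t + eP T t))
      (Finsupp.single (u 0) (2 * sP T 0)) (Finsupp.single (u m) (2 * sP T m)) := by
  intro m
  induction m with
  | zero => intro _; simpa using reach_refl _
  | succ m ih =>
    intro hm
    have hb := reach_block m (sP T m) (eP T m) (sP_eq T m (by omega))
    have e1 : (4*m+6) * eP T m = 2 * sP T (m+1) := by
      rw [sP_succ T m (by omega)]
      ring
    rw [e1] at hb
    have := reach_trans (ih (by omega)) hb
    rwa [Finset.sum_range_succ]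

end OharaPf
namespace OharaPf

lemma aa_ne_zero (i : ℕ+) : aa i ≠ 0 := by
  show A (i:ℕ) ≠ 0
  unfold A
  split_ifs with h1 h2
  · simp only [ne_eq, Nat.cast_eq_zero]; omega
  · simp
  · simp

lemma bb_ne_zero (i : ℕ+) : bb i ≠ 0 := by
  show B (i:ℕ) ≠ 0
  unfold B
  split_ifs with h1 h2
  · simp
  · simp
  · simp

lemma mem_Sa (i : ℕ+) : aa i ≠ ⊤ ↔ (((i:ℕ) % 2 = 1 ∧ 5 ≤ (i:ℕ)) ∨ ((i:ℕ) % 4 = 2 ∧ 6 ≤ (i:ℕ))) := by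
  show A (i:ℕ) ≠ ⊤ ↔ _
  unfold A
  split_ifs with h1 h2
  · simp [ENat.coe_ne_top]; tauto
  · simp [ENat.coe_ne_top]; tauto
  · simp; omega

lemma mem_Sb (i : ℕ+) : bb i ≠ ⊤ ↔ (((i:ℕ) % 2 = 1 ∧ 3 ≤ (i:ℕ)) ∨ ((i:ℕ) % 4 = 2 ∧ 6 ≤ (i:ℕ))) := by
  show B (i:ℕ) ≠ ⊤ ↔ _
  unfold B
  split_ifs with h1 h2
  · simp [ENat.coe_ne_top]; tauto
  · simp [ENat.coe_ne_top]; tauto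
  · simp; omega

lemma pp_coe (i : ℕ+) : ((pp i : ℕ+) : ℕ) = Phi (i:ℕ) := rfl

lemma phiequiv : PhiEquiv aa bb pp := by
  refine ⟨aa_ne_zero, bb_ne_zero, ⟨?_, ?_, ?_⟩, ?_⟩
  · -- MapsTo
    intro i hi
    have hi' := (mem_Sa i).mp hi
    show bb (pp i) ≠ ⊤
    rw [mem_Sb, pp_coe]
    unfold Phi
    rcases hi' with h | h
    · rw [if_pos (by omega)]; omega
    · rw [if_neg (by omega), if_pos (by omega)]; omega
  · -- InjOn
    intro i hi i' hi' h
    have hi1 := (mem_Sa i).mp hi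
    have hi2 := (mem_Sa i').mp hi'
    have hval : Phi (i:ℕ) = Phi (i':ℕ) := by
      have := congrArg (fun x : ℕ+ => (x:ℕ)) h
      simpa [pp_coe] using this
    apply PNat.coe_injective
    unfold Phi at hval
    rcases hi1 with h1 | h1 <;> rcases hi2 with h2 | h2
    · rw [if_pos (by omega), if_pos (by omega)] at hval; omega
    · rw [if_pos (by omega), if_neg (by omega), if_pos (by omega)] at hval; omega
    · rw [if_neg (by omega), if_pos (by omega), if_pos (by omega)] at hval; omega
    · rw [if_neg (by omega), if_pos (by omega), if_neg (by omega), if_pos (by omega)] at hval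
      omega
  · -- SurjOn
    intro j hj
    have hj' := (mem_Sb j).mp hj
    rcases hj' with h | h
    · refine ⟨⟨2*(j:ℕ), by omega⟩, ?_, ?_⟩
      · apply (mem_Sa _).mpr
        right
        constructor <;> simp <;> omega
      · apply PNat.coe_injective
        show Phi (2*(j:ℕ)) = (j:ℕ)
        unfold Phi
        rw [if_neg (by omega), if_pos (by omega)]
        omega
    · refine ⟨⟨(j:ℕ)/2 + 2, by omega⟩, ?_, ?_⟩
      · apply (mem_Sa _).mpr
        left
        constructor <;> simp <;> omega
      · apply PNat.coe_injective
        show Phi ((j:ℕ)/2 + 2) = (j:ℕ)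
        unfold Phi
        rw [if_pos (by omega)]
        omega
  · -- products
    intro i hi
    have hi' := (mem_Sa i).mp hi
    rcases hi' with h | h
    · have ha : aa i = ((2*(i:ℕ) - 4 : ℕ) : ℕ∞) := by
        show A (i:ℕ) = _
        unfold A
        rw [if_pos (by omega)]
      have hp : ((pp i : ℕ+):ℕ) = 2*(i:ℕ) - 4 := by
        rw [pp_coe]; unfold Phi; rw [if_pos (by omega)]
      have hb : bb (pp i) = (((i:ℕ) : ℕ) : ℕ∞) := by
        show B ((pp i : ℕ+):ℕ) = _
        rw [hp]
        unfold B
        rw [if_neg (by omega), if_pos (by omega)]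
        congr 1
        omega
      rw [ha, hb, hp]
      rw [← Nat.cast_mul, ← Nat.cast_mul]
      congr 1
      ring
    · have ha : aa i = ((1:ℕ) : ℕ∞) := by
        show A (i:ℕ) = _
        unfold A
        rw [if_neg (by omega), if_pos (by omega)]
      have hp : ((pp i : ℕ+):ℕ) = (i:ℕ)/2 := by
        rw [pp_coe]; unfold Phi; rw [if_neg (by omega), if_pos (by omega)]
      have hb : bb (pp i) = ((2:ℕ) : ℕ∞) := by
        show B ((pp i : ℕ+):ℕ) = _
        rw [hp]
        unfold B
        rw [if_pos (by omega)]
      rw [ha, hb, hp]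
      rw [← Nat.cast_mul, ← Nat.cast_mul]
      congr 1
      omega

end OharaPf
namespace OharaPf

def fpath : ℤ → ℕ+ := fun k =>
  if 2 ∣ k then ⟨k.toNat + 3, by omega⟩ else ⟨2*k.toNat + 4, by omega⟩

lemma fpath_coe_even (k : ℤ) (h : 2 ∣ k) : ((fpath k : ℕ+) : ℕ) = k.toNat + 3 := by
  unfold fpath; exact congrArg PNat.val (if_pos h)

lemma fpath_coe_odd (k : ℤ) (h : ¬ 2 ∣ k) : ((fpath k : ℕ+) : ℕ) = 2*k.toNat + 4 := by
  unfold fpath; exact congrArg PNat.val (if_neg h)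

lemma pathgraph : IsPathGraph aa bb pp := by
  refine ⟨Set.Ici 0, fpath, Set.ordConnected_Ici, ?_, ?_, ?_, ?_⟩
  · -- InjOn
    intro k1 h1 k2 h2 h
    have h1' : (0:ℤ) ≤ k1 := h1
    have h2' : (0:ℤ) ≤ k2 := h2
    have hval : ((fpath k1 : ℕ+):ℕ) = ((fpath k2 : ℕ+):ℕ) := by exact_mod_cast h
    by_cases d1 : 2 ∣ k1 <;> by_cases d2 : 2 ∣ k2
    · rw [fpath_coe_even _ d1, fpath_coe_even _ d2] at hval; omega
    · rw [fpath_coe_even _ d1, fpath_coe_odd _ d2] at hval; omega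
    · rw [fpath_coe_odd _ d1, fpath_coe_even _ d2] at hval; omega
    · rw [fpath_coe_odd _ d1, fpath_coe_odd _ d2] at hval; omega
  · -- image
    ext i
    simp only [Set.mem_image, Set.mem_union, Set.mem_setOf_eq]
    constructor
    · rintro ⟨k, hk, rfl⟩
      have hk' : (0:ℤ) ≤ k := hk
      right
      rw [mem_Sb]
      by_cases d : 2 ∣ k
      · left; rw [fpath_coe_even k d]; omega
      · right; rw [fpath_coe_odd k d]; omega
    · intro hyp
      have hi : ((i:ℕ) % 2 = 1 ∧ 3 ≤ (i:ℕ)) ∨ ((i:ℕ) % 4 = 2 ∧ 6 ≤ (i:ℕ)) := by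
        rcases hyp with h | h
        · rcases (mem_Sa i).mp h with h' | h'
          · left; omega
          · right; omega
        · exact (mem_Sb i).mp h
      rcases hi with h | h
      · refine ⟨(i:ℕ) - 3, by rw [Set.mem_Ici]; omega, ?_⟩
        apply PNat.coe_injective
        rw [fpath_coe_even _ (by omega)]
        omega
      · refine ⟨(2*(((i:ℕ)-6)/4)+1 : ℕ), by rw [Set.mem_Ici]; omega, ?_⟩
        apply PNat.coe_injective
        rw [fpath_coe_odd _ (by omega)]
        omega
  · -- edges
    intro k hk hk1
    have hk' : (0:ℤ) ≤ k := hk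
    apply PNat.coe_injective
    rw [pp_coe]
    by_cases d : 2 ∣ k
    · have d1 : ¬ 2 ∣ (k+1) := by omega
      rw [fpath_coe_odd _ d1, fpath_coe_even _ d]
      unfold Phi
      rw [if_neg (by omega), if_pos (by omega)]
      omega
    · have d1 : 2 ∣ (k+1) := by omega
      rw [fpath_coe_even _ d1, fpath_coe_odd _ d]
      unfold Phi
      rw [if_pos (by omega)]
      omega
  · -- supp(a) condition
    intro i hi
    rcases (mem_Sa i).mp hi with h | h
    · refine ⟨(i:ℕ) - 3, by rw [Set.mem_Ici]; omega, ?_, by rw [Set.mem_Ici]; omega⟩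
      apply PNat.coe_injective
      rw [fpath_coe_even _ (by omega)]
      omega
    · refine ⟨(2*(((i:ℕ)-6)/4)+1 : ℕ), by rw [Set.mem_Ici]; omega, ?_, by rw [Set.mem_Ici]; omega⟩
      apply PNat.coe_injective
      rw [fpath_coe_odd _ (by omega)]
      omega

end OharaPf
namespace OharaPf

lemma aa_u0 : aa (u 0) = ⊤ := by
  show A 3 = ⊤
  unfold A
  rw [if_neg (by omega), if_neg (by omega)]

lemma inA_lam (c : ℕ) : InA aa (Finsupp.single (u 0) c) := by
  intro i
  by_cases h : i = u 0
  · subst h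
    rw [aa_u0, Finsupp.single_eq_same]
    exact lt_top_iff_ne_top.mpr (ENat.coe_ne_top c)
  · rw [Finsupp.single_eq_of_ne' (Ne.symm h)]
    have := aa_ne_zero i
    simpa [pos_iff_ne_zero] using this

lemma psize_single (i : ℕ+) (c : ℕ) : psize (Finsupp.single i c) = (i:ℕ) * c := by
  unfold psize
  rw [Finsupp.sum_single_index]
  simp

lemma harm (m : ℕ) : Real.log (m+2) - Real.log 2 ≤ ∑ t ∈ Finset.range m, (1:ℝ)/(t+2) := by
  induction m with
  | zero => simp
  | succ m ih =>
    rw [Finset.sum_range_succ]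
    have key : Real.log ((m:ℝ)+3) - Real.log ((m:ℝ)+2) ≤ 1/((m:ℝ)+2) := by
      have hx : (0:ℝ) < ((m:ℝ)+3)/((m:ℝ)+2) := by positivity
      have h1 := Real.log_le_sub_one_of_pos hx
      rw [Real.log_div (by positivity) (by positivity)] at h1
      have e : ((m:ℝ)+3)/((m:ℝ)+2) - 1 = 1/((m:ℝ)+2) := by
        field_simp
        norm_num
      linarith [h1, e.ge]
    have cast1 : (((m+1:ℕ)):ℝ) + 2 = (m:ℝ)+3 := by push_cast; ring
    rw [cast1]
    linarith

end OharaPf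

namespace OharaPf

lemma analysis (T n K : ℕ) (hT8 : (8:ℕ) ≤ T) (hn21 : (21:ℕ) ≤ n)
    (hsum : (n:ℝ)/4 * (Real.log ((T:ℝ)+3) - Real.log 2) ≤ (K:ℝ))
    (hnle : (n:ℝ) ≤ (2*(T:ℝ)+5)^(T+3)) :
    (1/100 : ℝ) * (n:ℝ) * Real.log (Real.log (n:ℝ)) ≤ (K:ℝ) := by
  have hT8' : (8:ℝ) ≤ (T:ℝ) := by exact_mod_cast hT8
  have hn2 : (1:ℝ) < (n:ℝ) := by
    have : (21:ℝ) ≤ (n:ℝ) := by exact_mod_cast hn21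
    linarith
  have hlogn_pos : 0 < Real.log (n:ℝ) := Real.log_pos hn2
  have hlogn : Real.log (n:ℝ) ≤ ((T:ℝ)+3) * Real.log (2*(T:ℝ)+5) := by
    have h := Real.log_le_log (by linarith) hnle
    rw [Real.log_pow] at h
    have e : ((T+3:ℕ):ℝ) = (T:ℝ)+3 := by push_cast; ring
    rwa [e] at h
  have hlog25 : Real.log (2*(T:ℝ)+5) ≤ 2*(T:ℝ)+5 := by
    have := Real.log_le_sub_one_of_pos (show (0:ℝ) < 2*(T:ℝ)+5 by linarith)
    linarith
  have hlogpos25 : 0 ≤ Real.log (2*(T:ℝ)+5) :=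
    Real.log_nonneg (by linarith)
  have hlogn2 : Real.log (n:ℝ) ≤ (2*(T:ℝ)+5)^2 := by
    have h1 : ((T:ℝ)+3) * Real.log (2*(T:ℝ)+5) ≤ ((T:ℝ)+3) * (2*(T:ℝ)+5) :=
      mul_le_mul_of_nonneg_left hlog25 (by linarith)
    nlinarith
  have hloglog : Real.log (Real.log (n:ℝ)) ≤ 2 * Real.log (2*(T:ℝ)+5) := by
    have h1 := Real.log_le_log hlogn_pos hlogn2
    have e : ((2*(T:ℝ)+5)^2 : ℝ) = (2*(T:ℝ)+5)^(2:ℕ) := by norm_num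
    rw [e, Real.log_pow] at h1
    simpa using h1
  have hsq : 8*(T:ℝ) ≤ (T:ℝ)*(T:ℝ) := mul_le_mul_of_nonneg_right hT8' (by linarith)
  have hfin : Real.log (2*(T:ℝ)+5) ≤ 2 * (Real.log ((T:ℝ)+3) - Real.log 2) := by
    have hle : 2*(T:ℝ)+5 ≤ ((T:ℝ)+3)^2/4 := by
      rw [le_div_iff₀ (by norm_num : (0:ℝ) < 4)]
      nlinarith
    have h1 := Real.log_le_log (by linarith) hle
    have e1 : Real.log (((T:ℝ)+3)^2/4) = 2*Real.log ((T:ℝ)+3) - 2*Real.log 2 := by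
      rw [Real.log_div (by positivity) (by norm_num)]
      have e2 : (((T:ℝ)+3)^2 : ℝ) = ((T:ℝ)+3)^(2:ℕ) := by norm_num
      rw [e2, Real.log_pow]
      have e3 : (4:ℝ) = 2^(2:ℕ) := by norm_num
      rw [e3, Real.log_pow]
      push_cast
      ring
    rw [e1] at h1
    linarith
  have hL0 : 0 ≤ Real.log ((T:ℝ)+3) - Real.log 2 := by
    have := Real.log_le_log (by norm_num : (0:ℝ) < 2) (by linarith : (2:ℝ) ≤ (T:ℝ)+3)
    linarith
  have hn0 : (0:ℝ) ≤ (n:ℝ) := by linarith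
  calc (1/100 : ℝ) * (n:ℝ) * Real.log (Real.log (n:ℝ))
      ≤ (1/100 : ℝ) * (n:ℝ) * (4 * (Real.log ((T:ℝ)+3) - Real.log 2)) := by
        apply mul_le_mul_of_nonneg_left _ (by positivity)
        linarith
    _ ≤ (n:ℝ)/4 * (Real.log ((T:ℝ)+3) - Real.log 2) := by nlinarith
    _ ≤ (K:ℝ) := hsum

end OharaPf

/-- there are `φ`-equivalent sequences `a, b` with `G_φ` a
path and a constant `c > 0` such that for infinitely many `n` some
`λ ∈ 𝒜_n` admits a rewrite sequence of length at least `c·n·log(log n)`. -/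
theorem ohara_path_lower_bound :
    ∃ (a b : ℕ+ → ℕ∞) (phi : ℕ+ → ℕ+),
      PhiEquiv a b phi ∧ IsPathGraph a b phi ∧
      ∃ c : ℝ, 0 < c ∧ ∀ N : ℕ, ∃ n : ℕ, N ≤ n ∧
        ∃ lam : ℕ+ →₀ ℕ, InA a lam ∧ psize lam = n ∧
          ∃ (seq : ℕ → (ℕ+ →₀ ℕ)) (k : ℕ), seq 0 = lam ∧
            (∀ l < k, OStep a b phi (seq l) (seq (l + 1))) ∧
            c * n * Real.log (Real.log n) ≤ (k : ℝ) := by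
  refine ⟨OharaPf.aa, OharaPf.bb, OharaPf.pp, OharaPf.phiequiv, OharaPf.pathgraph,
    1/100, by norm_num, ?_⟩
  intro N
  set T : ℕ := N + 8 with hT
  set n : ℕ := 2 * OharaPf.PP T with hn
  have hPPge : 2*(T+1)+3 ≤ OharaPf.PP T := by
    apply Finset.single_le_prod' (f := fun j => 2*j+3)
    · intro i _; omega
    · simp
  refine ⟨n, by rw [hn]; omega, ?_⟩
  refine ⟨Finsupp.single (OharaPf.u 0) (2 * OharaPf.sP T 0), OharaPf.inA_lam _, ?_, ?_⟩
  · rw [OharaPf.psize_single]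
    have h30 := OharaPf.sP_mul T 0 (by omega)
    show (2*0+3) * (2 * OharaPf.sP T 0) = n
    omega
  · obtain ⟨seq, h0, hk, hsteps⟩ := OharaPf.reach_main T (T+1) le_rfl
    set K : ℕ := ∑ t ∈ Finset.range (T+1), (OharaPf.sP T t + OharaPf.eP T t) with hK
    refine ⟨seq, K, h0, hsteps, ?_⟩
    -- lower bound on K
    have hterm : ∀ t ∈ Finset.range (T+1),
        (n:ℝ)/4 * (1/((t:ℝ)+2)) ≤ ((OharaPf.sP T t + OharaPf.eP T t : ℕ) : ℝ) := by
      intro t ht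
      simp only [Finset.mem_range] at ht
      have hnat : n ≤ (OharaPf.sP T t) * (4*(t+2)) := by
        have h1 := OharaPf.sP_mul T t (by omega)
        rw [hn, ← h1]
        calc 2*((2*t+3) * OharaPf.sP T t) = (4*t+6) * OharaPf.sP T t := by ring
          _ ≤ (4*(t+2)) * OharaPf.sP T t := Nat.mul_le_mul (by omega) (le_refl _)
          _ = OharaPf.sP T t * (4*(t+2)) := Nat.mul_comm _ _
      have hr : (n:ℝ) ≤ (OharaPf.sP T t : ℝ) * (4*((t:ℝ)+2)) := by exact_mod_cast hnat
      have hpos : (0:ℝ) < 4*((t:ℝ)+2) := by positivity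
      have e1 : (n:ℝ)/4 * (1/((t:ℝ)+2)) = (n:ℝ) / (4*((t:ℝ)+2)) := by
        field_simp
      rw [e1, div_le_iff₀ hpos]
      have hep : (0:ℝ) ≤ (OharaPf.eP T t : ℝ) := by positivity
      have hmono : (OharaPf.sP T t : ℝ) * (4*((t:ℝ)+2)) ≤
          ((OharaPf.sP T t + OharaPf.eP T t : ℕ):ℝ) * (4*((t:ℝ)+2)) := by
        apply mul_le_mul_of_nonneg_right _ hpos.le
        push_cast
        linarith
      linarith [hr, hmono]
    have h2 := Finset.sum_le_sum hterm
    rw [← Finset.mul_sum] at h2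
    have h3 := OharaPf.harm (T+1)
    have hcastK : (K:ℝ) = ∑ t ∈ Finset.range (T+1), ((OharaPf.sP T t + OharaPf.eP T t : ℕ):ℝ) := by
      rw [hK]; push_cast; ring
    have hcast3 : ((T+1:ℕ):ℝ) + 2 = (T:ℝ) + 3 := by push_cast; ring
    rw [hcast3] at h3
    have hn4 : (0:ℝ) ≤ (n:ℝ)/4 := by positivity
    have hsum : (n:ℝ)/4 * (Real.log ((T:ℝ)+3) - Real.log 2) ≤ (K:ℝ) := by
      calc (n:ℝ)/4 * (Real.log ((T:ℝ)+3) - Real.log 2)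
          ≤ (n:ℝ)/4 * ∑ t ∈ Finset.range (T+1), (1:ℝ)/((t:ℝ)+2) :=
            mul_le_mul_of_nonneg_left h3 hn4
        _ ≤ ∑ t ∈ Finset.range (T+1), ((OharaPf.sP T t + OharaPf.eP T t : ℕ):ℝ) := h2
        _ = (K:ℝ) := hcastK.symm
    -- upper bound on log log n
    have hn21 : (21:ℕ) ≤ n := by rw [hn]; omega
    have hp : OharaPf.PP T ≤ (2*T+5)^(T+2) := by
      have := Finset.prod_le_pow_card (Finset.range (T+2)) (fun j => 2*j+3) (2*T+5)
        (by intro i hi; simp only [Finset.mem_range] at hi; show 2*i+3 ≤ 2*T+5; omega)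
      simpa [OharaPf.PP] using this
    have hnle : n ≤ (2*T+5)^(T+3) := by
      calc n = 2 * OharaPf.PP T := hn
        _ ≤ 2 * (2*T+5)^(T+2) := Nat.mul_le_mul_left 2 hp
        _ ≤ (2*T+5) * (2*T+5)^(T+2) := Nat.mul_le_mul (by omega) (le_refl _)
        _ = (2*T+5)^(T+3) := (pow_succ' _ _).symm
    have hnleR : (n:ℝ) ≤ (2*(T:ℝ)+5)^(T+3) := by exact_mod_cast hnle
    exact OharaPf.analysis T n K (by omega) hn21 hsum hnleR
end
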